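/- arXiv:2010.11516 — 4 statements merged into one kernel-verified Lean document; each statement's English description precedes it below -/
import Mathlib

section
/- Let M be a finitely generated graded S-module with a minimal system of homogeneous generators f_1,...,f_m, let F = ⊕_{i=1}^m S e_i with the S-module homomorphism φ: F → M sending e_i to f_i, and let C = Ker(φ). Fix a monomial order < on S and order F by u e_i < v e_j if i < j, or i = j and u < v. Then the initial module of C decomposes as in_<(C) = ⊕_{j=1}^m in_<(I_j) e_j, where I_j = (f_1,...,f_{j-1}) : f_j. -/
open MvPolynomial Finsupp

namespace Paper

variable (K : Type) [Field K] (n : ℕ)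

/-- The polynomial ring `S = K[x_1,…,x_n]`. -/
abbrev S := MvPolynomial (Fin n) K

/-- An ideal of `S` is generated by linear forms. -/
def GenByLinearForms (I : Ideal (S K n)) : Prop :=
  ∃ L : Set (S K n), (∀ f ∈ L, f ∈ homogeneousSubmodule (Fin n) K 1) ∧ I = Ideal.span L

variable {M : Type} [AddCommGroup M] [Module (S K n) M]

/-- `M` has linear quotients with respect to the system of generators `f`. -/
def HasLinearQuotientsWith {s : ℕ} (f : Fin s → M) : Prop :=
  (Submodule.span (S K n) (Set.range f) = ⊤) ∧
  ∀ j : Fin s,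
    ((Submodule.span (S K n) (f '' {i | i < j})).colon (Submodule.span (S K n) {f j}) = ⊤ ∨
      GenByLinearForms K n
        ((Submodule.span (S K n) (f '' {i | i < j})).colon (Submodule.span (S K n) {f j})))

/-- A minimal system of generators. -/
def IsMinimalGenSys {s : ℕ} (f : Fin s → M) : Prop :=
  Submodule.span (S K n) (Set.range f) = ⊤ ∧
  ∀ j, f j ∉ Submodule.span (S K n) (f '' {i | i ≠ j})

/-- The degree `t` component of the graded free module `⊕ S(-a i)`. -/
def freeComp {r : ℕ} (a : Fin r → ℕ) (t : ℕ) :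
    Submodule K (Fin r →₀ S K n) where
  carrier := {v | ∀ i, v i ∈ homogeneousSubmodule (Fin n) K (t - a i) ∧ (t < a i → v i = 0)}
  add_mem' := by
    intro v w hv hw i
    refine ⟨Submodule.add_mem _ (hv i).1 (hw i).1, fun h => ?_⟩
    simp [Finsupp.add_apply, (hv i).2 h, (hw i).2 h]
  zero_mem' := by
    intro i
    simp
  smul_mem' := by
    intro c v hv i
    refine ⟨Submodule.smul_mem _ c (hv i).1, fun h => ?_⟩
    simp [Finsupp.smul_apply, (hv i).2 h]

variable [Module K M] [IsScalarTower K (S K n) M]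

/-- A graded free resolution of the graded module `M` with graded pieces `ℳ`. -/
structure GradedFreeResolution (ℳ : ℕ → Submodule K M) where
  rk : ℕ → ℕ
  deg : (i : ℕ) → Fin (rk i) → ℕ
  d : (i : ℕ) → ((Fin (rk (i+1)) →₀ S K n) →ₗ[S K n] (Fin (rk i) →₀ S K n))
  aug : (Fin (rk 0) →₀ S K n) →ₗ[S K n] M
  aug_surj : Function.Surjective aug
  exact_aug : Function.Exact (d 0) aug
  exact : ∀ i, Function.Exact (d (i+1)) (d i)
  aug_graded : ∀ t, ∀ v ∈ freeComp K n (deg 0) t, aug v ∈ ℳ t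
  d_graded : ∀ i t, ∀ v ∈ freeComp K n (deg (i+1)) t, d i v ∈ freeComp K n (deg i) t

/-- `M` (with grading `ℳ`) has a `d₀`-linear resolution. -/
def HasLinearResolution (ℳ : ℕ → Submodule K M) (d₀ : ℕ) : Prop :=
  ∃ R : GradedFreeResolution K n ℳ, ∀ i k, R.deg i k = d₀ + i

/-- The submodule of `M` generated by the homogeneous elements of degree `j`. -/
noncomputable def degreeSubmodule (ℳ : ℕ → Submodule K M) (j : ℕ) : Submodule (S K n) M :=
  Submodule.span (S K n) (ℳ j : Set M)

/-- The grading induced on a submodule. -/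
noncomputable def subGrading (ℳ : ℕ → Submodule K M) (N : Submodule (S K n) M) : ℕ → Submodule K N :=
  fun t => (ℳ t).comap ((N.subtype).restrictScalars K)

/-- `M` is componentwise linear. -/
def ComponentwiseLinear (ℳ : ℕ → Submodule K M) : Prop :=
  ∀ j : ℕ, HasLinearResolution K n (subGrading K n ℳ (degreeSubmodule K n ℳ j)) j

/-- `ℳ` is a grading of the `S`-module `M`. -/
structure IsGrading (ℳ : ℕ → Submodule K M) : Prop where
  internal : DirectSum.IsInternal (fun i => ℳ i)
  smul_mem : ∀ i j : ℕ, ∀ p ∈ homogeneousSubmodule (Fin n) K i, ∀ x ∈ ℳ j, p • x ∈ ℳ (i + j)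

/-- The graded maximal ideal of `S`. -/
noncomputable def maxIdeal : Ideal (S K n) := Ideal.span (Set.range X)

/-- Minimality of a graded free resolution. -/
def IsMinimalRes {ℳ : ℕ → Submodule K M} (R : GradedFreeResolution K n ℳ) : Prop :=
  (∀ i, LinearMap.range (R.d i) ≤ (maxIdeal K n) • (⊤ : Submodule (S K n) (Fin (R.rk i) →₀ S K n))) ∧
  (LinearMap.ker R.aug ≤ (maxIdeal K n) • (⊤ : Submodule (S K n) (Fin (R.rk 0) →₀ S K n)))

/-- The graded Betti numbers read off from a resolution. -/
def betti {ℳ : ℕ → Submodule K M} (R : GradedFreeResolution K n ℳ) (i j : ℕ) : ℕ :=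
  (Finset.univ.filter (fun k => R.deg i k = j)).card

/-- `g` is an `M`-regular sequence of elements of the graded maximal ideal. -/
def IsRegularSeq {t : ℕ} (g : Fin t → S K n) : Prop :=
  (∀ i, g i ∈ maxIdeal K n) ∧
  (∀ i : Fin t, ∀ x : M,
      g i • x ∈ (Ideal.span (g '' {i' | i' < i})) • (⊤ : Submodule (S K n) M) →
        x ∈ (Ideal.span (g '' {i' | i' < i})) • (⊤ : Submodule (S K n) M)) ∧
  (Ideal.span (Set.range g)) • (⊤ : Submodule (S K n) M) ≠ ⊤

/-- The depth of `M` over `S`. -/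
noncomputable def depth : ℕ∞ :=
  sSup ((fun t : ℕ => (t : ℕ∞)) ''
    {t : ℕ | ∃ g : Fin t → S K n, IsRegularSeq K n (M := M) g})

end Paper

section MonOrd

open MvPolynomial

variable {K : Type} [Field K] {σ : Type*}

/-- The leading exponent of a polynomial with respect to a monomial order. -/
noncomputable def leadExp (m : MonomialOrder σ) (p : MvPolynomial σ K) : σ →₀ ℕ :=
  m.toSyn.symm (p.support.sup (fun c => m.toSyn c))

/-- The initial ideal of `J` with respect to a monomial order. -/
noncomputable def inIdeal (m : MonomialOrder σ) (J : Ideal (MvPolynomial σ K)) :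
    Ideal (MvPolynomial σ K) :=
  Ideal.span ((fun p => monomial (leadExp m p) (1 : K)) '' {p | p ∈ J ∧ p ≠ 0})

variable {A B : Type*}

/-- The restriction of an exponent vector to the first block of variables. -/
noncomputable def xPart (c : (A ⊕ B) →₀ ℕ) : A →₀ ℕ :=
  Finsupp.comapDomain Sum.inl c Sum.inl_injective.injOn

/-- The restriction of an exponent vector to the second block of variables. -/
noncomputable def yPart (c : (A ⊕ B) →₀ ℕ) : B →₀ ℕ :=
  Finsupp.comapDomain Sum.inr c Sum.inr_injective.injOn

/-- `ord` compares the `y`-part first (via `ordY`) and breaks ties using the `x`-part. -/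
def ComparesYFirst (ord : MonomialOrder (A ⊕ B)) (ordY : MonomialOrder B)
    (ordX : MonomialOrder A) : Prop :=
  ∀ c d : (A ⊕ B) →₀ ℕ,
    ord.toSyn c < ord.toSyn d ↔
      (ordY.toSyn (yPart c) < ordY.toSyn (yPart d) ∨
        (yPart c = yPart d ∧ ordX.toSyn (xPart c) < ordX.toSyn (xPart d)))

/-- The x-condition: the initial ideal of `J` is generated by monomials involving
at most one `x`-variable, with exponent at most 1. -/
def XCondition [Fintype A] (ord : MonomialOrder (A ⊕ B)) (J : Ideal (MvPolynomial (A ⊕ B) K)) :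
    Prop :=
  ∃ D : Set ((A ⊕ B) →₀ ℕ), (∀ c ∈ D, (∑ i : A, c (Sum.inl i)) ≤ 1) ∧
    inIdeal ord J = Ideal.span ((fun c => monomial c (1 : K)) '' D)

/-- Lexicographic comparison of exponent vectors, where `prio j i` means that variable `j`
has strictly higher priority than `i`. -/
def lexLt (prio : A → A → Prop) (a b : A →₀ ℕ) : Prop :=
  ∃ i, a i < b i ∧ ∀ j, prio j i → a j = b j

end MonOrd

namespace Paper

open Finsupp

/-- With the position-over-term order on `F = ⊕ S e_j` (with `e_1 < … < e_m`),
the initial module of the syzygy module `C = ker φ` decomposes as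
`in(C) = ⊕_j in(I_j) e_j` where `I_j = (f_1,…,f_{j-1}) : f_j`. -/
theorem statement3 (K : Type) [Field K] (n : ℕ)
    (M : Type) [AddCommGroup M] [Module (S K n) M] [Module K M] [IsScalarTower K (S K n) M]
    (ℳ : ℕ → Submodule K M) (hgr : IsGrading K n ℳ)
    (hfin : Module.Finite (S K n) M)
    (m : ℕ) (f : Fin m → M) (df : Fin m → ℕ)
    (hhom : ∀ j, f j ∈ ℳ (df j))
    (hmin : IsMinimalGenSys K n f)
    (ord : MonomialOrder (Fin n))
    (φ : (Fin m →₀ S K n) →ₗ[S K n] M)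
    (hφ : φ = Finsupp.linearCombination (S K n) f)
    (C : Submodule (S K n) (Fin m →₀ S K n))
    (hC : C = LinearMap.ker φ) :
    -- `in_<(C) = ⊕_{j=1}^m in_<(I_j) e_j`
    Submodule.span (S K n)
      {w : Fin m →₀ S K n | ∃ v ∈ C, v ≠ 0 ∧ ∃ j : Fin m, v j ≠ 0 ∧ (∀ j', j < j' → v j' = 0) ∧
        w = Finsupp.single j (monomial (leadExp ord (v j)) (1 : K))} =
    Submodule.span (S K n)
      {w : Fin m →₀ S K n | ∃ (j : Fin m) (g : S K n),
        g ∈ (Submodule.span (S K n) (f '' {i | i < j})).colon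
              (Submodule.span (S K n) {f j}) ∧ g ≠ 0 ∧
        w = Finsupp.single j (monomial (leadExp ord g) (1 : K))} := by
  congr 1
  ext w
  constructor
  · rintro ⟨v, hv, hv0, j, hvj, htop, rfl⟩
    refine ⟨j, v j, Submodule.mem_colon_span_singleton.2 ?_, hvj, rfl⟩
    have h0 : Finsupp.linearCombination (S K n) f v = 0 := by
      rw [hC, hφ] at hv; exact hv
    rw [Finsupp.linearCombination_apply, Finsupp.sum] at h0
    have hj : j ∈ v.support := Finsupp.mem_support_iff.2 hvj
    have hsum : v j • f j + ∑ i ∈ v.support.erase j, v i • f i = 0 := by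
      rw [← h0]; exact Finset.add_sum_erase _ (fun i => v i • f i) hj
    have hvjf : v j • f j = -∑ i ∈ v.support.erase j, v i • f i :=
      eq_neg_of_add_eq_zero_left hsum
    rw [hvjf]
    refine Submodule.neg_mem _ (Submodule.sum_mem _ fun i hi => ?_)
    have hij : i ≠ j := (Finset.mem_erase.1 hi).1
    have hine : v i ≠ 0 := Finsupp.mem_support_iff.1 (Finset.mem_erase.1 hi).2
    have hilt : i < j := by
      rcases lt_trichotomy i j with h | h | h
      · exact h
      · exact absurd h hij
      · exact absurd (htop i h) hine
    exact Submodule.smul_mem _ _ (Submodule.subset_span ⟨i, hilt, rfl⟩)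
  · rintro ⟨j, g, hg, hg0, rfl⟩
    have hmem : g • f j ∈ Submodule.span (S K n) (f '' {i | i < j}) :=
      Submodule.mem_colon_span_singleton.1 hg
    obtain ⟨l, hl, hlc⟩ := (Finsupp.mem_span_image_iff_linearCombination (S K n)).1 hmem
    refine ⟨Finsupp.single j g - l, ?_, ?_, j, ?_, ?_, ?_⟩
    · rw [hC, LinearMap.mem_ker, hφ, map_sub, hlc, Finsupp.linearCombination_single]
      exact sub_self _
    · have hlj : l j = 0 := by
        have := hl
        rw [Finsupp.mem_supported] at this
        by_contra h
        exact absurd (this (Finsupp.mem_support_iff.2 h)) (lt_irrefl j)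
      intro h
      apply hg0
      have := congrArg (fun z => z j) h
      simpa [hlj] using this
    · have hlj : l j = 0 := by
        have := hl
        rw [Finsupp.mem_supported] at this
        by_contra h
        exact absurd (this (Finsupp.mem_support_iff.2 h)) (lt_irrefl j)
      simpa [hlj]
    · intro j' hjj'
      have hlj' : l j' = 0 := by
        have := hl
        rw [Finsupp.mem_supported] at this
        by_contra h
        exact absurd (lt_trans (this (Finsupp.mem_support_iff.2 h)) hjj') (lt_irrefl j')
      simp [hlj', Finsupp.single_apply_eq_zero, hjj'.ne']
    · have hlj : l j = 0 := by
        have := hl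
        rw [Finsupp.mem_supported] at this
        by_contra h
        exact absurd (this (Finsupp.mem_support_iff.2 h)) (lt_irrefl j)
      simp [hlj]


end Paper
end

section
/- Let M be a finitely generated graded S-module with a minimal system of homogeneous generators f_1,...,f_m, φ: F = ⊕ S e_i → M with φ(e_i) = f_i and C = Ker(φ), and order F as above. If every generator of the initial module in_<(C) has the form u e_i with deg u ≤ 1, then M has linear quotients (in fact each colon ideal (f_1,...,f_{j-1}) : f_j which is a proper ideal is generated by linear forms). -/
open MvPolynomial Finsupp

namespace Aux
variable {K : Type} [Field K] {σ : Type*} (m : MonomialOrder σ)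

theorem toSyn_leadExp (p : MvPolynomial σ K) :
    m.toSyn (leadExp m p) = p.support.sup (fun c => m.toSyn c) :=
  m.toSyn.apply_symm_apply _

theorem leadExp_mem {p : MvPolynomial σ K} (hp : p ≠ 0) : leadExp m p ∈ p.support := by
  obtain ⟨b, hb, he⟩ := Finset.exists_mem_eq_sup p.support
    (MvPolynomial.support_nonempty.mpr hp) (fun c => m.toSyn c)
  rw [leadExp, he, m.toSyn.symm_apply_apply]
  exact hb

theorem le_leadExp {p : MvPolynomial σ K} {c : σ →₀ ℕ} (hc : c ∈ p.support) :
    m.toSyn c ≤ m.toSyn (leadExp m p) := by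
  rw [toSyn_leadExp]; exact Finset.le_sup hc

theorem coeff_leadExp_ne_zero {p : MvPolynomial σ K} (hp : p ≠ 0) :
    coeff (leadExp m p) p ≠ 0 :=
  MvPolynomial.mem_support_iff.mp (leadExp_mem m hp)

theorem eq_C_of_leadExp_eq_zero {p : MvPolynomial σ K} (hp : p ≠ 0) (h : leadExp m p = 0) :
    ∃ a : K, a ≠ 0 ∧ p = C a := by
  have hsupp : ∀ c ∈ p.support, c = 0 := by
    intro c hc
    have h1 := le_leadExp m hc
    rw [h, map_zero] at h1
    have h2 : (0:m.syn) ≤ m.toSyn c := by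
      rw [← m.bot_eq_zero]; exact bot_le
    have : m.toSyn c = m.toSyn 0 := by rw [map_zero]; exact le_antisymm h1 h2
    exact m.toSyn.injective this
  refine ⟨coeff 0 p, ?_, ?_⟩
  · have := leadExp_mem m hp
    rw [h] at this
    exact MvPolynomial.mem_support_iff.mp this
  · classical
    ext d
    rw [coeff_C]
    by_cases hd : d = 0
    · subst hd; simp
    · rw [if_neg (Ne.symm hd)]
      by_contra hne
      exact hd (hsupp d (MvPolynomial.mem_support_iff.mpr hne))


theorem leadExp_monomial_mul {e : σ →₀ ℕ} {c : K} (hc : c ≠ 0) {p : MvPolynomial σ K}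
    (hp : p ≠ 0) : leadExp m (monomial e c * p) = e + leadExp m p := by
  have hco : coeff (e + leadExp m p) (monomial e c * p) ≠ 0 := by
    rw [coeff_monomial_mul]
    exact mul_ne_zero hc (coeff_leadExp_ne_zero m hp)
  have hq : (monomial e c * p) ≠ 0 := fun h => hco (by simp [h])
  have hle : ∀ d ∈ (monomial e c * p).support, m.toSyn d ≤ m.toSyn (e + leadExp m p) := by
    intro d hd
    rw [MvPolynomial.mem_support_iff, coeff_monomial_mul'] at hd
    by_cases hed : e ≤ d
    · rw [if_pos hed] at hd
      have hdp : d - e ∈ p.support :=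
        MvPolynomial.mem_support_iff.mpr (fun h => hd (by rw [h, mul_zero]))
      have : d = e + (d - e) := by rw [add_comm, tsub_add_cancel_of_le hed]
      rw [this, map_add, map_add]
      exact add_le_add (le_refl _) (le_leadExp m hdp)
    · exact absurd hd (by rw [if_neg hed]; simp)
  apply m.toSyn.injective
  apply le_antisymm
  · rw [toSyn_leadExp]
    exact Finset.sup_le hle
  · exact le_leadExp m (MvPolynomial.mem_support_iff.mpr hco)

theorem reduction {p ℓ : MvPolynomial σ K} (hp : p ≠ 0) (hl : ℓ ≠ 0)
    (hle : leadExp m ℓ ≤ leadExp m p) :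
    p - monomial (leadExp m p - leadExp m ℓ) (coeff (leadExp m p) p / coeff (leadExp m ℓ) ℓ) * ℓ = 0 ∨
    m.toSyn (leadExp m (p - monomial (leadExp m p - leadExp m ℓ)
      (coeff (leadExp m p) p / coeff (leadExp m ℓ) ℓ) * ℓ)) < m.toSyn (leadExp m p) := by
  set a := leadExp m p with ha
  set k := leadExp m ℓ with hk
  set c := coeff a p / coeff k ℓ with hc
  have hc0 : c ≠ 0 := div_ne_zero (coeff_leadExp_ne_zero m hp) (coeff_leadExp_ne_zero m hl)
  set q := monomial (a - k) c * ℓ with hqdef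
  have hq0 : q ≠ 0 := mul_ne_zero (fun h => hc0 (by simpa using (MvPolynomial.monomial_eq_zero).mp h)) hl
  have hqe : leadExp m q = a := by
    rw [hqdef, leadExp_monomial_mul m hc0 hl, ← hk, tsub_add_cancel_of_le hle]
  have hqc : coeff a q = coeff a p := by
    have h2 : coeff ((a - k) + k) ((monomial (a - k)) c * ℓ) = c * coeff k ℓ := by
      rw [coeff_monomial_mul]
    rw [tsub_add_cancel_of_le hle] at h2
    rw [hqdef, h2, hc, div_mul_cancel₀ _ (coeff_leadExp_ne_zero m hl)]
  by_cases hpq : p - q = 0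
  · exact Or.inl hpq
  · right
    by_contra hlt
    push_neg at hlt
    have hd := leadExp_mem m hpq
    set d := leadExp m (p - q) with hd'
    have hdle : m.toSyn d ≤ m.toSyn a := by
      rw [MvPolynomial.mem_support_iff, MvPolynomial.coeff_sub] at hd
      rcases (by by_contra hco; push_neg at hco; exact hd (by rw [hco.1, hco.2, sub_zero]) :
        coeff d p ≠ 0 ∨ coeff d q ≠ 0) with h | h
      · exact le_leadExp m (MvPolynomial.mem_support_iff.mpr h)
      · rw [← hqe]; exact le_leadExp m (MvPolynomial.mem_support_iff.mpr h)
    have : d = a := m.toSyn.injective (le_antisymm hdle hlt)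
    rw [MvPolynomial.mem_support_iff, this, MvPolynomial.coeff_sub, hqc, sub_self] at hd
    exact hd rfl

theorem ideal_eq_span_of_forall_exists {I : Ideal (MvPolynomial σ K)} {L : Set (MvPolynomial σ K)}
    (hL : ∀ ℓ ∈ L, ℓ ∈ I)
    (h : ∀ g ∈ I, g ≠ 0 → ∃ ℓ ∈ L, ℓ ≠ 0 ∧ leadExp m ℓ ≤ leadExp m g) :
    I = Ideal.span L := by
  apply le_antisymm _ (Ideal.span_le.mpr hL)
  suffices H : ∀ s : m.syn, ∀ g, m.toSyn (leadExp m g) = s → g ∈ I → g ∈ Ideal.span L by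
    intro g hg; exact H _ g rfl hg
  intro s
  induction s using WellFoundedLT.induction with
  | _ s ih =>
    intro g hgs hg
    by_cases hg0 : g = 0
    · rw [hg0]; exact zero_mem _
    obtain ⟨ℓ, hℓL, hℓ0, hℓle⟩ := h g hg hg0
    set q := monomial (leadExp m g - leadExp m ℓ)
      (coeff (leadExp m g) g / coeff (leadExp m ℓ) ℓ) * ℓ with hqdef
    have hqspan : q ∈ Ideal.span L := Ideal.mul_mem_left _ _ (Ideal.subset_span hℓL)
    rcases reduction m hg0 hℓ0 hℓle with h0 | hlt
    · have : g = q := by rw [sub_eq_zero] at h0; exact h0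
      rw [this]; exact hqspan
    · have hgq : g - q ∈ I := sub_mem hg (hL ℓ hℓL |> fun hli => Ideal.mul_mem_left _ _ hli)
      have := ih _ (hgs ▸ hlt) (g - q) rfl hgq
      have hgg : g = (g - q) + q := by ring
      rw [hgg]; exact add_mem this hqspan

end Aux

namespace Paper

open Finsupp

set_option maxHeartbeats 4000000 in
set_option synthInstance.maxHeartbeats 400000 in
/-- If every generator of the initial module of `C = ker φ` has the form
`u·e_i` with `deg u ≤ 1`, then each proper colon ideal `(f_1,…,f_{j-1}) : f_j` is generated by
linear forms; in particular `M` has linear quotients. -/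
theorem statement4 (K : Type) [Field K] (n : ℕ)
    (M : Type) [AddCommGroup M] [Module (S K n) M] [Module K M] [IsScalarTower K (S K n) M]
    (ℳ : ℕ → Submodule K M) (hgr : IsGrading K n ℳ)
    (hfin : Module.Finite (S K n) M)
    (m : ℕ) (f : Fin m → M) (df : Fin m → ℕ)
    (hhom : ∀ j, f j ∈ ℳ (df j))
    (hmin : IsMinimalGenSys K n f)
    (ord : MonomialOrder (Fin n))
    (φ : (Fin m →₀ S K n) →ₗ[S K n] M)
    (hφ : φ = Finsupp.linearCombination (S K n) f)
    (C : Submodule (S K n) (Fin m →₀ S K n))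
    (hC : C = LinearMap.ker φ)
    -- the generators of the initial module of `C` are of the form `u e_i` with `deg u ≤ 1`
    (hgen : ∃ D : Set (Fin m × ((Fin n) →₀ ℕ)),
      (∀ jc ∈ D, (jc.2.sum fun _ e => e) ≤ 1) ∧
      Submodule.span (S K n)
        {w : Fin m →₀ S K n | ∃ v ∈ C, v ≠ 0 ∧ ∃ j : Fin m, v j ≠ 0 ∧
          (∀ j', j < j' → v j' = 0) ∧
          w = Finsupp.single j (monomial (leadExp ord (v j)) (1 : K))} =
      Submodule.span (S K n)
        ((fun jc : Fin m × ((Fin n) →₀ ℕ) =>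
          Finsupp.single jc.1 (monomial jc.2 (1 : K))) '' D)) :
    (∀ j : Fin m,
      (Submodule.span (S K n) (f '' {i | i < j})).colon (Submodule.span (S K n) {f j}) = ⊤ ∨
      GenByLinearForms K n
        ((Submodule.span (S K n) (f '' {i | i < j})).colon (Submodule.span (S K n) {f j}))) ∧
    HasLinearQuotientsWith K n f := by
  classical
  obtain ⟨hmin1, hmin2⟩ := hmin
  obtain ⟨D, hD1, hD2⟩ := hgen
  subst hφ
  subst hC
  have hφv : ∀ v : Fin m →₀ S K n,
      Finsupp.linearCombination (S K n) f v = ∑ i : Fin m, v i • f i := by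
    intro v
    rw [Finsupp.linearCombination_apply]
    exact Finsupp.sum_fintype _ _ (fun i => zero_smul _ _)
  suffices hmain : ∀ j : Fin m,
      GenByLinearForms K n
        ((Submodule.span (S K n) (f '' {i | i < j})).colon
          (Submodule.span (S K n) {f j})) by
    exact ⟨fun j => Or.inr (hmain j), hmin1, fun j => Or.inr (hmain j)⟩
  intro j
  set N : Submodule (S K n) M := Submodule.span (S K n) (f '' {i | i < j}) with hN
  set I : Ideal (S K n) := N.colon (Submodule.span (S K n) {f j}) with hI
  have hIiff : ∀ g : S K n, g ∈ I ↔ g • f j ∈ N := by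
    intro g
    rw [hI, Submodule.mem_colon]
    constructor
    · intro h; exact h (f j) (Submodule.mem_span_singleton_self _)
    · intro h p hp
      obtain ⟨s, rfl⟩ := Submodule.mem_span_singleton.mp hp
      rw [smul_smul, mul_comm, ← smul_smul]
      exact Submodule.smul_mem _ _ h
  have hmem0 : ∀ v : Fin m →₀ S K n, (∑ i : Fin m, v i • f i) = 0 →
      (∀ j', j < j' → v j' = 0) → v j • f j ∈ N := by
    intro v hsum htail
    have h00 : (∑ i : Fin m, v i • f i) = v j • f j + ∑ i ∈ Finset.univ.erase j, v i • f i :=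
      (Finset.add_sum_erase _ (fun i => v i • f i) (Finset.mem_univ j)).symm
    have h0 : v j • f j + ∑ i ∈ Finset.univ.erase j, v i • f i = 0 := by
      rw [← h00]; exact hsum
    rw [eq_neg_of_add_eq_zero_left h0]
    refine Submodule.neg_mem _ (Submodule.sum_mem _ ?_)
    intro i hi
    rcases (Finset.ne_of_mem_erase hi).lt_or_gt with h | h
    · exact Submodule.smul_mem _ _ (Submodule.subset_span ⟨i, h, rfl⟩)
    · rw [htail i h, zero_smul]; exact Submodule.zero_mem _
  have hcontra : ∀ v : Fin m →₀ S K n, (∑ i : Fin m, v i • f i) = 0 →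
      (∀ j', j < j' → v j' = 0) → v j ≠ 0 → leadExp ord (v j) ≠ 0 := by
    intro v hsum htail hvj h0
    obtain ⟨a, ha, hCa⟩ := Aux.eq_C_of_leadExp_eq_zero ord hvj h0
    have h1 : v j • f j ∈ N := hmem0 v hsum htail
    rw [hCa, ← MvPolynomial.algebraMap_eq, algebraMap_smul] at h1
    have h3 : f j ∈ N := by
      have h2 := Submodule.smul_mem N (MvPolynomial.C (a⁻¹) : S K n) h1
      rw [← MvPolynomial.algebraMap_eq, algebraMap_smul, smul_smul,
        inv_mul_cancel₀ ha, one_smul] at h2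
      exact h2
    exact hmin2 j (Submodule.span_mono
      (Set.image_mono (f := f) (fun i (hi : i < j) => (ne_of_lt hi : i ≠ j))) h3)
  have hcomp : ∀ v : Fin m →₀ S K n, (∑ i : Fin m, v i • f i) = 0 →
      (∀ j', j < j' → v j' = 0) →
      (MvPolynomial.homogeneousComponent 1 (v j)) • f j ∈ N := by
    intro v hsum htail
    by_cases h1 : MvPolynomial.homogeneousComponent 1 (v j) = 0
    · rw [h1, zero_smul]; exact Submodule.zero_mem _
    set Nn : ℕ := Finset.univ.sup (fun i : Fin m => (v i).totalDegree) with hNn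
    set T : ℕ := Nn + Finset.univ.sup df + df j + 2 with hT
    set P : Finset (Fin m × ℕ) := Finset.univ ×ˢ Finset.range (Nn+1) with hP
    set x : ℕ → M := fun t => ∑ p ∈ P.filter (fun p => p.2 + df p.1 = t),
      (MvPolynomial.homogeneousComponent p.2 (v p.1)) • f p.1 with hx
    have hmemx : ∀ t, x t ∈ ℳ t := by
      intro t
      refine Submodule.sum_mem _ ?_
      intro p hp
      rw [Finset.mem_filter] at hp
      rw [← hp.2]
      exact hgr.smul_mem p.2 (df p.1) _
        (MvPolynomial.homogeneousComponent_mem p.2 (v p.1)) _ (hhom p.1)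
    have hsumx : ∑ t ∈ Finset.range T, x t = 0 := by
      rw [hx]
      rw [Finset.sum_fiberwise_of_maps_to (g := fun p : Fin m × ℕ => p.2 + df p.1)
        (t := Finset.range T) (fun p hp => ?_)
        (fun p : Fin m × ℕ => (MvPolynomial.homogeneousComponent p.2 (v p.1)) • f p.1)]
      · rw [Finset.sum_product]
        have hrow : ∀ i : Fin m,
            ∑ d ∈ Finset.range (Nn+1), (MvPolynomial.homogeneousComponent d (v i)) • f i
              = v i • f i := by
          intro i
          rw [← Finset.sum_smul]
          congr 1
          conv_rhs => rw [← MvPolynomial.sum_homogeneousComponent (v i)]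
          symm
          apply Finset.sum_subset
          · apply Finset.range_subset_range.mpr
            have h5 : (v i).totalDegree ≤ Nn :=
              Finset.le_sup (f := fun i : Fin m => (v i).totalDegree) (Finset.mem_univ i)
            omega
          · intro d _ hd
            rw [Finset.mem_range, not_lt] at hd
            exact MvPolynomial.homogeneousComponent_eq_zero _ _ (by omega)
        rw [Finset.sum_congr rfl (fun i _ => hrow i)]
        exact hsum
      · rw [hP, Finset.mem_product, Finset.mem_range] at hp
        have h2 : df p.1 ≤ Finset.univ.sup df := Finset.le_sup (Finset.mem_univ p.1)
        have h4 : p.2 < Nn + 1 := hp.2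
        rw [Finset.mem_range]
        show p.2 + df p.1 < T
        omega
    have hx0 : x (df j + 1) = 0 := by
      set w : DirectSum ℕ (fun t => ℳ t) :=
        ∑ t ∈ Finset.range T, DirectSum.of (fun t => (ℳ t : Submodule K M)) t ⟨x t, hmemx t⟩ with hw
      have hcw : DirectSum.coeAddMonoidHom (fun t => (ℳ t : Submodule K M)) w = 0 := by
        rw [hw, map_sum]
        simp only [DirectSum.coeAddMonoidHom_of]
        exact hsumx
      have hw0 : w = 0 := hgr.internal.injective (by rw [hcw]; rw [map_zero])
      have ht : df j + 1 ∈ Finset.range T := by rw [Finset.mem_range]; omega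
      have happ : w (df j + 1) = ⟨x (df j + 1), hmemx _⟩ := by
        rw [hw, DFinsupp.finset_sum_apply]
        refine (Finset.sum_eq_single_of_mem (df j + 1) ht ?_).trans ?_
        · intro t _ hne
          exact DirectSum.of_eq_of_ne _ _ _ hne.symm
        · exact DirectSum.of_eq_same _ _
      rw [hw0] at happ
      have := congrArg (fun z : (ℳ (df j + 1) : Submodule K M) => (z : M)) happ.symm
      simpa using this
    have hP1 : (j, 1) ∈ P.filter (fun p => p.2 + df p.1 = df j + 1) := by
      rw [Finset.mem_filter]
      refine ⟨?_, by simp [add_comm]⟩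
      rw [hP, Finset.mem_product]
      refine ⟨Finset.mem_univ _, Finset.mem_range.mpr ?_⟩
      have h2 : 1 ≤ (v j).totalDegree := by
        by_contra hh; push_neg at hh
        exact h1 (MvPolynomial.homogeneousComponent_eq_zero _ _ (by omega))
      have h3 : (v j).totalDegree ≤ Nn :=
        Finset.le_sup (f := fun i : Fin m => (v i).totalDegree) (Finset.mem_univ j)
      omega
    have hsplit0 :
        (MvPolynomial.homogeneousComponent 1 (v j)) • f j +
          ∑ p ∈ (P.filter (fun p => p.2 + df p.1 = df j + 1)).erase (j, 1),
            (MvPolynomial.homogeneousComponent p.2 (v p.1)) • f p.1 = x (df j + 1) := by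
      simp only [hx]; rw [← Finset.add_sum_erase _ _ hP1]
    have hsplit := hsplit0.trans hx0
    rw [eq_neg_of_add_eq_zero_left hsplit]
    refine Submodule.neg_mem _ (Submodule.sum_mem _ ?_)
    intro p hp
    have hpe := Finset.mem_of_mem_erase hp
    rw [Finset.mem_filter] at hpe
    have hpne : p ≠ (j, 1) := Finset.ne_of_mem_erase hp
    rcases lt_trichotomy p.1 j with hlt | heq | hgt
    · exact Submodule.smul_mem _ _ (Submodule.subset_span ⟨p.1, hlt, rfl⟩)
    · exfalso
      apply hpne
      have h2 : p.2 + df p.1 = df j + 1 := hpe.2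
      rw [heq] at h2
      have : p.2 = 1 := by omega
      exact Prod.ext heq this
    · rw [htail p.1 hgt, map_zero, zero_smul]; exact Submodule.zero_mem _
  -- projection lemma
  have hproj : ∀ (Tset : Set (Fin m →₀ S K n)) (E : Set ((Fin n) →₀ ℕ)),
      (∀ w ∈ Tset, w j = 0 ∨ ∃ d ∈ E, w j = MvPolynomial.monomial d (1:K)) →
      ∀ w ∈ Submodule.span (S K n) Tset,
        w j ∈ Ideal.span ((fun d => (MvPolynomial.monomial d (1:K) : S K n)) '' E) := by
    intro Tset E hTE w hw
    have h1 : (Finsupp.lapply j : (Fin m →₀ S K n) →ₗ[S K n] S K n) w ∈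
        Submodule.map (Finsupp.lapply j : (Fin m →₀ S K n) →ₗ[S K n] S K n)
          (Submodule.span (S K n) Tset) := Submodule.mem_map_of_mem hw
    rw [Submodule.map_span] at h1
    have h2 : Submodule.span (S K n)
        ((Finsupp.lapply j : (Fin m →₀ S K n) →ₗ[S K n] S K n) '' Tset) ≤
        Ideal.span ((fun d => (MvPolynomial.monomial d (1:K) : S K n)) '' E) := by
      apply Submodule.span_le.mpr
      rintro y ⟨w', hw', rfl⟩
      simp only [Finsupp.lapply_apply]
      rcases hTE w' hw' with h0 | ⟨d, hd, he⟩
      · rw [h0]; exact zero_mem _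
      · rw [he]; exact Ideal.subset_span ⟨d, hd, rfl⟩
    have h3 := h2 h1
    simpa only [Finsupp.lapply_apply] using h3
  set Ej : Set ((Fin n) →₀ ℕ) := {d | ∃ v : Fin m →₀ S K n,
    Finsupp.linearCombination (S K n) f v = 0 ∧ v ≠ 0 ∧ v j ≠ 0 ∧
    (∀ j', j < j' → v j' = 0) ∧ leadExp ord (v j) = d} with hEj
  have keyB : ∀ g ∈ I, g ≠ 0 →
      ∃ ℓ ∈ {p : S K n | p ∈ I ∧ p ∈ homogeneousSubmodule (Fin n) K 1},
        ℓ ≠ 0 ∧ leadExp ord ℓ ≤ leadExp ord g := by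
    intro g hgI hg0
    have hgf : g • f j ∈ N := (hIiff g).mp hgI
    rw [hN, Finsupp.mem_span_image_iff_linearCombination] at hgf
    obtain ⟨l, hl, hlg⟩ := hgf
    rw [Finsupp.mem_supported] at hl
    have hlz : ∀ i : Fin m, ¬ i < j → l i = 0 := by
      intro i hi
      by_contra hc
      exact hi (hl (Finsupp.mem_support_iff.mpr hc))
    set v : Fin m →₀ S K n := Finsupp.single j g - l with hv
    have hvj : v j = g := by
      rw [hv, Finsupp.sub_apply, Finsupp.single_eq_same, hlz j (lt_irrefl j), sub_zero]
    have hvtail : ∀ j', j < j' → v j' = 0 := by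
      intro j' hj'
      rw [hv, Finsupp.sub_apply, Finsupp.single_eq_of_ne (ne_of_lt hj').symm,
        hlz j' (fun h => absurd (h.trans hj') (lt_irrefl j')), sub_zero]
    have hv0 : v ≠ 0 := fun h => hg0 (by rw [← hvj, h]; rfl)
    have hφ0 : Finsupp.linearCombination (S K n) f v = 0 := by
      rw [hv, map_sub, Finsupp.linearCombination_single, hlg, sub_self]
    -- step 1 : monomial (leadExp g) 1 ∈ ideal span of D_j monomials
    have hw0 : Finsupp.single j (MvPolynomial.monomial (leadExp ord (v j)) (1:K)) ∈
        Submodule.span (S K n)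
          {w : Fin m →₀ S K n | ∃ v ∈ LinearMap.ker (Finsupp.linearCombination (S K n) f),
            v ≠ 0 ∧ ∃ j : Fin m, v j ≠ 0 ∧ (∀ j', j < j' → v j' = 0) ∧
            w = Finsupp.single j (MvPolynomial.monomial (leadExp ord (v j)) (1 : K))} :=
      Submodule.subset_span ⟨v, LinearMap.mem_ker.mpr hφ0, hv0, j,
        (by rw [hvj]; exact hg0), hvtail, rfl⟩
    rw [hD2] at hw0
    have hmono1 : MvPolynomial.monomial (leadExp ord g) (1:K) ∈
        Ideal.span ((fun d => (MvPolynomial.monomial d (1:K) : S K n)) ''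
          {d | (j, d) ∈ D}) := by
      have := hproj _ {d | (j, d) ∈ D} ?_ _ hw0
      · rw [Finsupp.single_eq_same, hvj] at this
        exact this
      · rintro w ⟨⟨j', c⟩, hjc, rfl⟩
        by_cases hjj : j' = j
        · subst hjj
          exact Or.inr ⟨c, hjc, Finsupp.single_eq_same⟩
        · exact Or.inl (Finsupp.single_eq_of_ne (Ne.symm hjj))
    obtain ⟨c, hcD, hc⟩ := MvPolynomial.mem_ideal_span_monomial_image.mp hmono1
      (leadExp ord g) (by
        rw [MvPolynomial.support_monomial, if_neg (one_ne_zero)]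
        exact Finset.mem_singleton_self _)
    -- step 2 : from (j,c) ∈ D get element of Ej below c
    have hw1 : Finsupp.single j (MvPolynomial.monomial c (1:K)) ∈
        Submodule.span (S K n)
          ((fun jc : Fin m × ((Fin n) →₀ ℕ) =>
            Finsupp.single jc.1 (MvPolynomial.monomial jc.2 (1 : K))) '' D) :=
      Submodule.subset_span ⟨(j, c), hcD, rfl⟩
    rw [← hD2] at hw1
    have hmono2 : MvPolynomial.monomial c (1:K) ∈
        Ideal.span ((fun d => (MvPolynomial.monomial d (1:K) : S K n)) '' Ej) := by
      have := hproj _ Ej ?_ _ hw1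
      · rw [Finsupp.single_eq_same] at this
        exact this
      · rintro w ⟨v', hv'ker, hv'0, j', hv'j', htail', rfl⟩
        by_cases hjj : j' = j
        · rw [hjj] at hv'j' htail'
          refine Or.inr ⟨leadExp ord (v' j), ⟨v', LinearMap.mem_ker.mp hv'ker, hv'0,
            hv'j', htail', rfl⟩, ?_⟩
          rw [hjj, Finsupp.single_eq_same]
        · exact Or.inl (Finsupp.single_eq_of_ne (Ne.symm hjj))
    obtain ⟨d, hdE, hdc⟩ := MvPolynomial.mem_ideal_span_monomial_image.mp hmono2
      c (by
        rw [MvPolynomial.support_monomial, if_neg (one_ne_zero)]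
        exact Finset.mem_singleton_self _)
    obtain ⟨v', hv'ker, hv'0, hv'j, htail', hd⟩ := hdE
    have hv'sum : (∑ i : Fin m, v' i • f i) = 0 := by rw [← hφv]; exact hv'ker
    -- degree bounds
    have hcdeg : c.degree ≤ 1 := hD1 (j, c) hcD
    have hddeg : d.degree ≤ 1 := by
      refine le_trans ?_ hcdeg
      have hsub : d.support ⊆ c.support := by
        intro k hk
        rw [Finsupp.mem_support_iff] at hk ⊢
        intro h
        exact hk (Nat.le_zero.mp (h ▸ (Finsupp.le_def.mp hdc k)))
      calc d.degree = ∑ i ∈ d.support, d i := rfl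
        _ ≤ ∑ i ∈ c.support, d i := Finset.sum_le_sum_of_subset hsub
        _ ≤ ∑ i ∈ c.support, c i := Finset.sum_le_sum (fun i _ => Finsupp.le_def.mp hdc i)
        _ = c.degree := rfl
    rcases Nat.le_one_iff_eq_zero_or_eq_one.mp hddeg with hd0 | hd1
    · exfalso
      have : d = 0 := (Finsupp.degree_eq_zero_iff d).mp hd0
      exact hcontra v' hv'sum htail' hv'j (by rw [hd, this])
    · set ℓ : S K n := MvPolynomial.homogeneousComponent 1 (v' j) with hℓ
      have hcoeff : MvPolynomial.coeff d ℓ = MvPolynomial.coeff d (v' j) := by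
        rw [hℓ, MvPolynomial.coeff_homogeneousComponent, if_pos hd1]
      have hℓ0 : ℓ ≠ 0 := by
        intro h
        apply Aux.coeff_leadExp_ne_zero ord hv'j
        rw [hd, ← hcoeff, h, MvPolynomial.coeff_zero]
      have hsupp : ℓ.support ⊆ (v' j).support := by
        intro e he
        rw [MvPolynomial.mem_support_iff] at he ⊢
        intro h
        apply he
        rw [hℓ, MvPolynomial.coeff_homogeneousComponent]
        split <;> simp [h]
      have hlead : leadExp ord ℓ = d := by
        apply ord.toSyn.injective
        apply le_antisymm
        · have h1 : ord.toSyn (leadExp ord ℓ) ≤ ord.toSyn (leadExp ord (v' j)) := by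
            rw [Aux.toSyn_leadExp, Aux.toSyn_leadExp]
            exact Finset.sup_mono hsupp
          rw [hd] at h1
          exact h1
        · exact Aux.le_leadExp ord (MvPolynomial.mem_support_iff.mpr
            (by rw [hcoeff, ← hd]; exact Aux.coeff_leadExp_ne_zero ord hv'j))
      refine ⟨ℓ, ⟨(hIiff ℓ).mpr (hcomp v' hv'sum htail'), 
        MvPolynomial.homogeneousComponent_mem 1 (v' j)⟩, hℓ0, ?_⟩
      rw [hlead]
      exact le_trans hdc hc
  refine ⟨{p : S K n | p ∈ I ∧ p ∈ homogeneousSubmodule (Fin n) K 1},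
    fun p hp => hp.2, ?_⟩
  exact Aux.ideal_eq_span_of_forall_exists ord (fun ℓ hℓ => hℓ.1) keyB

end Paper
end

section
/- Let A = S[A_1] be a bigraded K-algebra with A_0 = S = K[x_1,...,x_n], presented by φ: T = K[x_1,...,x_n,y_1,...,y_m] → A with φ(y_j) = f_j generating A_1, and let J = Ker(φ). Suppose J satisfies the x-condition with respect to a monomial order < on T that first compares the y-part by a monomial order <' on K[y_1,...,y_m] and then the x-part by a monomial order on K[x_1,...,x_n]. Then for all k ≥ 1 the graded S-module A_k has linear quotients. -/
open MvPolynomial Finsupp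

namespace Paper

open MvPolynomial

variable (K : Type) [Field K] (n m : ℕ)

/-- The bigraded polynomial ring `T = K[x_1,…,x_n,y_1,…,y_m]`. -/
abbrev TT := MvPolynomial (Fin n ⊕ Fin m) K

/-- The inclusion `S → T` on the `x`-variables. -/
noncomputable def ιS : S K n →ₐ[K] TT K n m := rename Sum.inl

noncomputable instance : Algebra (S K n) (TT K n m) := (ιS K n m).toRingHom.toAlgebra

/-- The monomial `y^c` in `T`. -/
noncomputable def ymon (c : Fin m →₀ ℕ) : TT K n m :=
  monomial (Finsupp.mapDomain Sum.inr c) (1 : K)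

/-- Total `x`-degree of an exponent vector of `T`. -/
def xdegT (c : (Fin n ⊕ Fin m) →₀ ℕ) : ℕ := ∑ i : Fin n, c (Sum.inl i)

/-- Total `y`-degree of an exponent vector of `T`. -/
def ydegT (c : (Fin n ⊕ Fin m) →₀ ℕ) : ℕ := ∑ j : Fin m, c (Sum.inr j)

/-- Degree of a `y`-exponent vector. -/
def ydeg (c : Fin m →₀ ℕ) : ℕ := ∑ j : Fin m, c j

/-- `J` is a bihomogeneous ideal of `T`, where `deg x_i = (1,0)` and `deg y_j = (dY j, 1)`. -/
def IsBihomogIdeal (dY : Fin m → ℕ) (J : Ideal (TT K n m)) : Prop :=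
  ∃ Gs : Set (TT K n m),
    (∀ g ∈ Gs, ∃ a b : ℕ, ∀ c ∈ g.support,
        (xdegT n m c + ∑ j : Fin m, c (Sum.inr j) * dY j = a) ∧ ydegT n m c = b) ∧
    J = Ideal.span Gs

/-- `A_0 = S`: the polynomial subring `S` of `T` meets `J` trivially. -/
def SInjectsModJ (J : Ideal (TT K n m)) : Prop :=
  ∀ p : S K n, ιS K n m p ∈ J → p = 0

/-- The `S`-module `A_k` (the `y`-degree-`k` component of `A = T/J`) has linear quotients:
there is a system of generators of `A_k` given by (classes of) monomials in the `y`'s of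
degree `k` whose successive colon ideals are generated by linear forms. All computations
are performed in `T` modulo `J`. -/
def AkHasLinearQuotients (J : Ideal (TT K n m)) (k : ℕ) : Prop :=
  ∃ (s : ℕ) (H : Fin s → (Fin m →₀ ℕ)),
    (∀ j, ydeg m (H j) = k) ∧
    -- the monomials `y^{H j}` generate `A_k` over `S`
    (∀ c : Fin m →₀ ℕ, ydeg m c = k →
      ymon K n m c ∈
        Submodule.span (S K n) (Set.range (fun j => ymon K n m (H j))) ⊔
          (J : Submodule (TT K n m) (TT K n m)).restrictScalars (S K n)) ∧
    -- successive colon ideals are `S` or generated by linear forms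
    (∀ j : Fin s,
      ((Submodule.span (S K n) ((fun j' => ymon K n m (H j')) '' {i | i < j}) ⊔
          (J : Submodule (TT K n m) (TT K n m)).restrictScalars (S K n)).colon
        (Submodule.span (S K n) {ymon K n m (H j)}) = ⊤) ∨
      GenByLinearForms K n
        ((Submodule.span (S K n) ((fun j' => ymon K n m (H j')) '' {i | i < j}) ⊔
            (J : Submodule (TT K n m) (TT K n m)).restrictScalars (S K n)).colon
          (Submodule.span (S K n) {ymon K n m (H j)})))

end Paper

namespace Paper


section AuxBasics

open MvPolynomial Finsupp

variable {K : Type} [Field K] {n m : ℕ}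

/-- inclusion of x-exponents -/
noncomputable def el (a : Fin n →₀ ℕ) : (Fin n ⊕ Fin m) →₀ ℕ := Finsupp.mapDomain Sum.inl a

/-- inclusion of y-exponents -/
noncomputable def er (b : Fin m →₀ ℕ) : (Fin n ⊕ Fin m) →₀ ℕ := Finsupp.mapDomain Sum.inr b

@[simp] lemma el_apply_inl (a : Fin n →₀ ℕ) (i : Fin n) : el (m := m) a (Sum.inl i) = a i :=
  Finsupp.mapDomain_apply Sum.inl_injective a i

@[simp] lemma el_apply_inr (a : Fin n →₀ ℕ) (j : Fin m) : el (m := m) a (Sum.inr j) = 0 :=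
  Finsupp.mapDomain_notin_range a _ (by simp)

@[simp] lemma er_apply_inr (b : Fin m →₀ ℕ) (j : Fin m) : er (n := n) b (Sum.inr j) = b j :=
  Finsupp.mapDomain_apply Sum.inr_injective b j

@[simp] lemma er_apply_inl (b : Fin m →₀ ℕ) (i : Fin n) : er (n := n) b (Sum.inl i) = 0 :=
  Finsupp.mapDomain_notin_range b _ (by simp)

@[simp] lemma xPart_apply (c : (Fin n ⊕ Fin m) →₀ ℕ) (i : Fin n) :
    xPart c i = c (Sum.inl i) := rfl

@[simp] lemma yPart_apply (c : (Fin n ⊕ Fin m) →₀ ℕ) (j : Fin m) :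
    yPart c j = c (Sum.inr j) := rfl

@[simp] lemma xPart_el (a : Fin n →₀ ℕ) : xPart (el (m := m) a) = a := by
  ext i; simp

@[simp] lemma yPart_el (a : Fin n →₀ ℕ) : yPart (el (m := m) a) = 0 := by
  ext j; simp

@[simp] lemma xPart_er (b : Fin m →₀ ℕ) : xPart (er (n := n) b) = 0 := by
  ext i; simp

@[simp] lemma yPart_er (b : Fin m →₀ ℕ) : yPart (er (n := n) b) = b := by
  ext j; simp

@[simp] lemma xPart_add (c d : (Fin n ⊕ Fin m) →₀ ℕ) :
    xPart (c + d) = xPart c + xPart d := by ext i; simp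

@[simp] lemma yPart_add (c d : (Fin n ⊕ Fin m) →₀ ℕ) :
    yPart (c + d) = yPart c + yPart d := by ext j; simp

lemma el_add_er_split (c : (Fin n ⊕ Fin m) →₀ ℕ) :
    el (xPart c) + er (yPart c) = c := by
  ext s; rcases s with i | j <;> simp

lemma parts_ext {c d : (Fin n ⊕ Fin m) →₀ ℕ} (hx : xPart c = xPart d)
    (hy : yPart c = yPart d) : c = d := by
  ext s; rcases s with i | j
  · simpa using DFunLike.congr_fun hx i
  · simpa using DFunLike.congr_fun hy j

lemma sum_support_eq_sum_univ {α : Type*} [Fintype α] (a : α →₀ ℕ) :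
    a.degree = ∑ i : α, a i := by
  rw [Finsupp.degree]
  exact Finset.sum_subset (Finset.subset_univ _) (by
    intro x _ hx
    simpa using hx)

end AuxBasics
section AuxWeight

open MvPolynomial Finsupp

variable {K : Type} [Field K] {n m : ℕ}

/-- The bigrading weight on `T`. -/
def wt (dY : Fin m → ℕ) : (Fin n ⊕ Fin m) → ℕ × ℕ :=
  Sum.elim (fun _ => (1, 0)) (fun j => (dY j, 1))

lemma weight_eq (dY : Fin m → ℕ) (c : (Fin n ⊕ Fin m) →₀ ℕ) :
    weight (wt (n := n) dY) c =
      (xdegT n m c + ∑ j : Fin m, c (Sum.inr j) * dY j, ydegT n m c) := by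
  rw [Finsupp.weight_apply, Finsupp.sum_fintype _ _ (fun i => by simp)]
  rw [Fintype.sum_sum_type]
  apply Prod.ext
  · simp [wt, xdegT, Prod.fst_sum, smul_eq_mul, mul_comm]
  · simp [wt, ydegT, Prod.snd_sum, smul_eq_mul]

lemma weight_el (dY : Fin m → ℕ) (a : Fin n →₀ ℕ) :
    weight (wt (n := n) dY) (el (m := m) a) = (∑ i : Fin n, a i, 0) := by
  rw [weight_eq]
  simp [xdegT, ydegT]

lemma weight_er (dY : Fin m → ℕ) (b : Fin m →₀ ℕ) :
    weight (wt (n := n) dY) (er (n := n) b) = (∑ j : Fin m, b j * dY j, ydeg m b) := by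
  rw [weight_eq]
  simp [xdegT, ydegT, ydeg]

lemma ydegT_eq_ydeg_yPart (c : (Fin n ⊕ Fin m) →₀ ℕ) :
    ydegT n m c = ydeg m (yPart c) := by
  simp [ydegT, ydeg]

lemma snd_weight (dY : Fin m → ℕ) (c : (Fin n ⊕ Fin m) →₀ ℕ) :
    (weight (wt (n := n) dY) c).2 = ydeg m (yPart c) := by
  rw [weight_eq]; exact ydegT_eq_ydeg_yPart c

end AuxWeight

section AuxOrd

open MvPolynomial Finsupp

variable {K : Type} [Field K] {σ : Type*} (mo : MonomialOrder σ)

lemma toSyn_zero_min (a : σ →₀ ℕ) : ¬ (mo.toSyn a < mo.toSyn 0) := by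
  rw [map_zero]
  exact not_lt_of_ge bot_le

lemma leadExp_mem {p : MvPolynomial σ K} (hp : p ≠ 0) : leadExp mo p ∈ p.support := by
  obtain ⟨c, hc, hsup⟩ := Finset.exists_mem_eq_sup p.support
    (by simpa using hp) (fun c => mo.toSyn c)
  rw [leadExp, hsup]
  simpa using hc

lemma le_leadExp {p : MvPolynomial σ K} {c : σ →₀ ℕ} (hc : c ∈ p.support) :
    mo.toSyn c ≤ mo.toSyn (leadExp mo p) := by
  rw [leadExp, AddEquiv.apply_symm_apply]
  exact Finset.le_sup hc

lemma leadExp_eq {p : MvPolynomial σ K} {E : σ →₀ ℕ}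
    (hE : coeff E p ≠ 0) (hb : ∀ c ∈ p.support, mo.toSyn c ≤ mo.toSyn E) :
    leadExp mo p = E := by
  have h1 : p.support.sup (fun c => mo.toSyn c) = mo.toSyn E := by
    apply le_antisymm (Finset.sup_le hb)
    exact Finset.le_sup (by simpa using hE)
  rw [leadExp, h1, AddEquiv.symm_apply_apply]

lemma monomial_leadExp_mem_inIdeal {J : Ideal (MvPolynomial σ K)} {g : MvPolynomial σ K}
    (hg : g ∈ J) (hg0 : g ≠ 0) : monomial (leadExp mo g) (1 : K) ∈ inIdeal mo J :=
  Ideal.subset_span ⟨g, ⟨hg, hg0⟩, rfl⟩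

lemma exists_dvd_of_mem_inIdeal {J : Ideal (MvPolynomial σ K)} {D : Set (σ →₀ ℕ)}
    (hD : inIdeal mo J = Ideal.span ((fun c => monomial c (1 : K)) '' D))
    {E : σ →₀ ℕ} (hE : monomial E (1 : K) ∈ inIdeal mo J) :
    ∃ d ∈ D, d ≤ E := by
  rw [hD] at hE
  have := mem_ideal_span_monomial_image.mp hE E
  classical
  apply this
  rw [MvPolynomial.mem_support_iff, MvPolynomial.coeff_monomial, if_pos rfl]
  exact one_ne_zero

lemma exists_lead_dvd {J : Ideal (MvPolynomial σ K)} {d : σ →₀ ℕ}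
    (hd : monomial d (1 : K) ∈ inIdeal mo J) :
    ∃ g ∈ J, g ≠ 0 ∧ leadExp mo g ≤ d := by
  rw [inIdeal, ← Set.image_image (fun c => monomial c (1:K)) (fun p => leadExp mo p)]
    at hd
  classical
  have := mem_ideal_span_monomial_image.mp hd d (by
    rw [MvPolynomial.mem_support_iff, MvPolynomial.coeff_monomial, if_pos rfl]
    exact one_ne_zero)
  obtain ⟨l, ⟨g, hg, rfl⟩, hle⟩ := this
  exact ⟨g, hg.1, hg.2, hle⟩

lemma mem_inIdeal_of_dvd {J : Ideal (MvPolynomial σ K)} {d E : σ →₀ ℕ}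
    (hdE : d ≤ E) (hd : monomial d (1 : K) ∈ inIdeal mo J) :
    monomial E (1 : K) ∈ inIdeal mo J := by
  have : monomial E (1 : K) = monomial d (1 : K) * monomial (E - d) (1 : K) := by
    rw [monomial_mul, one_mul, add_tsub_cancel_of_le hdE]
  rw [this]
  exact Ideal.mul_mem_right _ _ hd

end AuxOrd




section AuxTT

open MvPolynomial Finsupp

variable {K : Type} [Field K] {n m : ℕ}

lemma smul_tt (s : S K n) (t : TT K n m) : s • t = ιS K n m s * t := by
  rw [Algebra.smul_def]
  rfl

lemma ymon_eq (u : Fin m →₀ ℕ) : ymon K n m u = monomial (er (n := n) u) (1 : K) := rfl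

lemma iota_monomial (a : Fin n →₀ ℕ) (r : K) :
    ιS K n m (monomial a r) = monomial (el (m := m) a) r := by
  rw [ιS]
  exact rename_monomial _ _ _

lemma iota_monomial_mul_ymon (a : Fin n →₀ ℕ) (r : K) (u : Fin m →₀ ℕ) :
    ιS K n m (monomial a r) * ymon K n m u = monomial (el a + er u) r := by
  rw [iota_monomial, ymon_eq, monomial_mul, mul_one]

lemma coeff_iota_mul_ymon (t : S K n) (a : Fin n →₀ ℕ) (u : Fin m →₀ ℕ) :
    coeff (el a + er u) (ιS K n m t * ymon K n m u) = coeff a t := by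
  rw [ymon_eq, coeff_mul_monomial, mul_one, ιS]
  show coeff (mapDomain Sum.inl a) (rename Sum.inl t) = coeff a t
  exact coeff_rename_mapDomain _ Sum.inl_injective t a

lemma support_iota_mul_ymon (t : S K n) (u : Fin m →₀ ℕ) {c : (Fin n ⊕ Fin m) →₀ ℕ}
    (hc : c ∈ (ιS K n m t * ymon K n m u).support) :
    ∃ a ∈ t.support, c = el a + er u := by
  classical
  have h1 := MvPolynomial.support_mul _ _ hc
  rw [Finset.mem_add] at h1
  obtain ⟨c1, hc1, c2, hc2, rfl⟩ := h1
  have hs : (ιS K n m t).support = t.support.image (mapDomain Sum.inl) := by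
    rw [ιS]
    exact support_rename_of_injective Sum.inl_injective
  rw [hs, Finset.mem_image] at hc1
  obtain ⟨a, ha, rfl⟩ := hc1
  rw [ymon_eq] at hc2
  rw [MvPolynomial.support_monomial, if_neg (one_ne_zero (α := K))] at hc2
  rw [Finset.mem_singleton] at hc2
  exact ⟨a, ha, by rw [hc2]; rfl⟩

lemma monomial_eq_smul_ymon {c : (Fin n ⊕ Fin m) →₀ ℕ} (r : K) :
    monomial c r = (monomial (xPart c) r : S K n) • ymon K n m (yPart c) := by
  rw [smul_tt, iota_monomial_mul_ymon, el_add_er_split]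

/-- Polynomials whose monomials all have `y`-part in `B` lie in the span of
the corresponding `y`-monomials. -/
lemma mem_span_ymon_of_support (B : Set (Fin m →₀ ℕ)) (p : TT K n m)
    (h : ∀ c ∈ p.support, yPart c ∈ B) :
    p ∈ Submodule.span (S K n) (ymon K n m '' B) := by
  classical
  rw [p.as_sum]
  apply Submodule.sum_mem
  intro c hc
  rw [monomial_eq_smul_ymon]
  exact Submodule.smul_mem _ _ (Submodule.subset_span ⟨yPart c, h c hc, rfl⟩)

lemma support_yPart_of_mem_span (B : Set (Fin m →₀ ℕ)) (p : TT K n m)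
    (hp : p ∈ Submodule.span (S K n) (ymon K n m '' B)) :
    ∀ c ∈ p.support, yPart c ∈ B := by
  classical
  induction hp using Submodule.span_induction with
  | mem x hx =>
    obtain ⟨b, hb, rfl⟩ := hx
    intro c hc
    rw [ymon_eq, MvPolynomial.support_monomial, if_neg (one_ne_zero (α := K))] at hc
    rw [Finset.mem_singleton] at hc
    subst hc
    simpa using hb
  | zero => simp
  | add x y _ _ hx hy =>
    intro c hc
    have := MvPolynomial.support_add (p := x) (q := y) hc
    rw [Finset.mem_union] at this
    rcases this with h | h
    · exact hx c h
    · exact hy c h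
  | smul t x _ hx =>
    intro c hc
    rw [smul_tt] at hc
    have h1 := MvPolynomial.support_mul _ _ hc
    rw [Finset.mem_add] at h1
    obtain ⟨c1, hc1, c2, hc2, rfl⟩ := h1
    have hs : (ιS K n m t).support = t.support.image (mapDomain Sum.inl) := by
      rw [ιS]
      exact support_rename_of_injective Sum.inl_injective
    rw [hs, Finset.mem_image] at hc1
    obtain ⟨a, _, rfl⟩ := hc1
    have : yPart (mapDomain Sum.inl a + c2) = yPart c2 := by
      have h0 : yPart (mapDomain Sum.inl a : (Fin n ⊕ Fin m) →₀ ℕ) = 0 := yPart_el a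
      rw [yPart_add, h0, zero_add]
    rw [this]
    exact hx c2 hc2

end AuxTT


section AuxHomog

open MvPolynomial Finsupp

variable {K : Type} [Field K] {n m : ℕ}

lemma support_whc {δ : ℕ × ℕ} {dY : Fin m → ℕ} {p : TT K n m}
    {c : (Fin n ⊕ Fin m) →₀ ℕ}
    (hc : c ∈ (weightedHomogeneousComponent (wt (n := n) dY) δ p).support) :
    c ∈ p.support ∧ weight (wt (n := n) dY) c = δ := by
  classical
  rw [MvPolynomial.mem_support_iff, coeff_weightedHomogeneousComponent] at hc
  by_cases h : weight (wt (n := n) dY) c = δ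
  · rw [if_pos h] at hc
    exact ⟨MvPolynomial.mem_support_iff.mpr hc, h⟩
  · rw [if_neg h] at hc
    exact absurd rfl hc

lemma J_homog {dY : Fin m → ℕ} {J : Ideal (TT K n m)}
    (hbihom : IsBihomogIdeal K n m dY J) (δ : ℕ × ℕ) {p : TT K n m} (hp : p ∈ J) :
    weightedHomogeneousComponent (wt (n := n) dY) δ p ∈ J := by
  classical
  obtain ⟨Gs, hG, rfl⟩ := hbihom
  letI : GradedAlgebra (weightedHomogeneousSubmodule K (wt (n := n) dY)) :=
    weightedGradedAlgebra K _
  have hhom : Ideal.IsHomogeneous (weightedHomogeneousSubmodule K (wt (n := n) dY))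
      (Ideal.span Gs) := by
    apply Ideal.homogeneous_span
    intro g hg
    obtain ⟨a, b, hab⟩ := hG g hg
    refine ⟨(a, b), ?_⟩
    rw [mem_weightedHomogeneousSubmodule]
    intro d hd
    have := hab d (MvPolynomial.mem_support_iff.mpr hd)
    rw [weight_eq]
    exact Prod.ext this.1 this.2
  have h2 := hhom δ hp
  have h3 : ((DirectSum.decompose (weightedHomogeneousSubmodule K (wt (n := n) dY)) p) δ :
      TT K n m) = weightedHomogeneousComponent (wt (n := n) dY) δ p :=
    MvPolynomial.decompose'_apply K _ p δ
  rwa [h3] at h2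

end AuxHomog


section AuxGEN

open MvPolynomial Finsupp

variable {K : Type} [Field K] {n m : ℕ}

lemma yPart_eq_u (ax : Fin n →₀ ℕ) (u : Fin m →₀ ℕ) :
    yPart (el ax + er u) = u := by
  rw [yPart_add, yPart_el, yPart_er, zero_add]

lemma xPart_eq_ax (ax : Fin n →₀ ℕ) (u : Fin m →₀ ℕ) :
    xPart (el ax + er u) = ax := by
  rw [xPart_add, xPart_el, xPart_er, add_zero]

/-- The key construction lemma: if `x^ax·y^u` has leading-monomial membership in `in(J)`,
then modulo `N` it can be rewritten with strictly `x`-smaller monomials. -/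
lemma GEN {dY : Fin m → ℕ} {J : Ideal (TT K n m)} {ord : MonomialOrder (Fin n ⊕ Fin m)}
    {ordY : MonomialOrder (Fin m)} {ordX : MonomialOrder (Fin n)}
    (hcomp : ComparesYFirst ord ordY ordX)
    (hbihom : IsBihomogIdeal K n m dY J)
    (N : Submodule (S K n) (TT K n m))
    (hNJ : ∀ g ∈ J, g ∈ N)
    (u : Fin m →₀ ℕ)
    (hN1 : ∀ b : Fin m →₀ ℕ, ydeg m b = ydeg m u → ordY.toSyn b < ordY.toSyn u →
      ymon K n m b ∈ N)
    (ax : Fin n →₀ ℕ)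
    (hmem : monomial (el ax + er u) (1 : K) ∈ inIdeal ord J) :
    ∃ q : S K n,
      q ∈ homogeneousSubmodule (Fin n) K (∑ i, ax i) ∧
      (∀ a ∈ q.support, ordX.toSyn a < ordX.toSyn ax) ∧
      ιS K n m (monomial ax 1) * ymon K n m u - ιS K n m q * ymon K n m u ∈ N := by
  classical
  set E' : (Fin n ⊕ Fin m) →₀ ℕ := el ax + er u with hE'def
  obtain ⟨g, hgJ, hg0, hglead⟩ := exists_lead_dvd ord hmem
  have hgc : coeff (leadExp ord g) g ≠ 0 :=
    MvPolynomial.mem_support_iff.mp (leadExp_mem ord hg0)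
  set lg := leadExp ord g with hlg
  have hEsplit : (E' - lg) + lg = E' := tsub_add_cancel_of_le hglead
  set g' : TT K n m := (coeff lg g)⁻¹ • (monomial (E' - lg) 1 * g) with hg'def
  have hg'J : g' ∈ J := by
    rw [hg'def, smul_eq_C_mul]
    exact Ideal.mul_mem_left _ _ (Ideal.mul_mem_left _ _ hgJ)
  have hcoeffg' : coeff E' g' = 1 := by
    have hmm := coeff_monomial_mul lg (E' - lg) (1 : K) g
    rw [hEsplit, one_mul] at hmm
    rw [hg'def, MvPolynomial.coeff_smul, hmm, smul_eq_mul]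
    exact inv_mul_cancel₀ hgc
  have hsupg' : ∀ c ∈ g'.support, ord.toSyn c ≤ ord.toSyn E' := by
    intro c hc
    have hc1 := MvPolynomial.support_smul hc
    have hc2 := MvPolynomial.support_mul _ _ hc1
    rw [Finset.mem_add] at hc2
    obtain ⟨c1, hc1', c2, hc2', rfl⟩ := hc2
    rw [MvPolynomial.support_monomial, if_neg (one_ne_zero (α := K))] at hc1'
    rw [Finset.mem_singleton] at hc1'
    subst hc1'
    calc ord.toSyn ((E' - lg) + c2) = ord.toSyn (E' - lg) + ord.toSyn c2 := map_add _ _ _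
    _ ≤ ord.toSyn (E' - lg) + ord.toSyn lg := by
        exact add_le_add le_rfl (le_leadExp ord hc2')
    _ = ord.toSyn ((E' - lg) + lg) := (map_add _ _ _).symm
    _ = ord.toSyn E' := by rw [hEsplit]
  set δ : ℕ × ℕ := weight (wt (n := n) dY) E' with hδdef
  set h2 : TT K n m := weightedHomogeneousComponent (wt (n := n) dY) δ g' with hh2def
  have hh2J : h2 ∈ J := J_homog hbihom δ hg'J
  have hch2 : coeff E' h2 = 1 := by
    rw [hh2def, coeff_weightedHomogeneousComponent, if_pos rfl, hcoeffg']
  set f : TT K n m := monomial E' 1 - h2 with hfdef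
  have hfsupp : ∀ c ∈ f.support,
      ord.toSyn c < ord.toSyn E' ∧ weight (wt (n := n) dY) c = δ := by
    intro c hc
    have hcf : coeff c f ≠ 0 := MvPolynomial.mem_support_iff.mp hc
    have hcne : c ≠ E' := by
      rintro rfl
      rw [hfdef, MvPolynomial.coeff_sub, coeff_monomial, if_pos rfl, hch2] at hcf
      simp at hcf
    have hch : coeff c f = - coeff c h2 := by
      rw [hfdef, MvPolynomial.coeff_sub, coeff_monomial, if_neg (Ne.symm hcne), zero_sub]
    have hch2' : c ∈ h2.support := by
      rw [MvPolynomial.mem_support_iff]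
      intro h0
      rw [hch, h0, neg_zero] at hcf
      exact hcf rfl
    have h3 := support_whc (dY := dY) (δ := δ) hch2'
    refine ⟨?_, h3.2⟩
    have hle := hsupg' c h3.1
    exact lt_of_le_of_ne hle (fun h => hcne (ord.toSyn.injective h))
  set Fs : Finset ((Fin n ⊕ Fin m) →₀ ℕ) := f.support.filter (fun c => yPart c = u) with hFs
  set q : S K n := ∑ c ∈ Fs, monomial (xPart c) (coeff c f) with hqdef
  have hq_mul : ιS K n m q * ymon K n m u = ∑ c ∈ Fs, monomial c (coeff c f) := by
    rw [hqdef, map_sum, Finset.sum_mul]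
    apply Finset.sum_congr rfl
    intro c hc
    rw [iota_monomial_mul_ymon]
    congr 1
    have hyc : yPart c = u := (Finset.mem_filter.mp hc).2
    conv_rhs => rw [← el_add_er_split c]
    rw [hyc]
  set f₂ : TT K n m :=
    ∑ c ∈ f.support.filter (fun c => ¬ (yPart c = u)), monomial c (coeff c f) with hf₂
  have hsplit : ιS K n m q * ymon K n m u + f₂ = f := by
    rw [hq_mul, hf₂]
    rw [Finset.sum_filter_add_sum_filter_not]
    exact (f.as_sum).symm
  have hf₂N : f₂ ∈ N := by
    rw [hf₂]
    apply Submodule.sum_mem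
    intro c hc
    rw [Finset.mem_filter] at hc
    obtain ⟨hcf, hcy⟩ := hc
    rw [monomial_eq_smul_ymon]
    apply Submodule.smul_mem
    obtain ⟨hlt, hwc⟩ := hfsupp c hcf
    have hyE' : yPart E' = u := yPart_eq_u ax u
    have hydeg : ydeg m (yPart c) = ydeg m u := by
      have h1 : (weight (wt (n := n) dY) c).2 = ydeg m (yPart c) := snd_weight dY c
      have h2' : (weight (wt (n := n) dY) E').2 = ydeg m (yPart E') := snd_weight dY E'
      rw [hwc, hδdef] at h1
      rw [h2', hyE'] at h1
      exact h1.symm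
    apply hN1 _ hydeg
    have := (hcomp c E').mp hlt
    rcases this with h | h
    · rwa [hyE'] at h
    · exact absurd (h.1.trans hyE') hcy
  have hxE' : xPart E' = ax := xPart_eq_ax ax u
  have hxdeg : ∀ c ∈ Fs, ∑ i : Fin n, c (Sum.inl i) = ∑ i : Fin n, ax i := by
    intro c hc
    rw [Finset.mem_filter] at hc
    obtain ⟨hcf, hcy⟩ := hc
    have hwc := (hfsupp c hcf).2
    have h1 := congrArg Prod.fst hwc
    rw [hδdef, weight_eq, weight_eq] at h1
    simp only [xdegT] at h1
    have hyco : ∀ j, c (Sum.inr j) = E' (Sum.inr j) := by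
      intro j
      have : yPart c j = yPart E' j := by rw [hcy, yPart_eq_u]
      simpa using this
    have h2' : ∑ j : Fin m, c (Sum.inr j) * dY j = ∑ j : Fin m, E' (Sum.inr j) * dY j :=
      Finset.sum_congr rfl (fun j _ => by rw [hyco j])
    have h3 : ∑ i : Fin n, c (Sum.inl i) = ∑ i : Fin n, E' (Sum.inl i) := by omega
    rw [h3]
    apply Finset.sum_congr rfl
    intro i _
    have : xPart E' i = ax i := by rw [hxE']
    simpa using this
  have hqhom : q ∈ homogeneousSubmodule (Fin n) K (∑ i, ax i) := by
    rw [hqdef]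
    apply Submodule.sum_mem
    intro c hc
    rw [mem_homogeneousSubmodule]
    apply isHomogeneous_monomial
    rw [sum_support_eq_sum_univ]
    calc ∑ i : Fin n, xPart c i = ∑ i : Fin n, c (Sum.inl i) :=
          Finset.sum_congr rfl (fun i _ => by simp)
    _ = ∑ i : Fin n, ax i := hxdeg c hc
  have hqsupp : ∀ a ∈ q.support, ordX.toSyn a < ordX.toSyn ax := by
    intro a ha
    have hca : coeff a q ≠ 0 := MvPolynomial.mem_support_iff.mp ha
    rw [hqdef, MvPolynomial.coeff_sum] at hca
    obtain ⟨c, hc, hcoeff⟩ := Finset.exists_ne_zero_of_sum_ne_zero hca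
    have hax : a = xPart c := by
      by_contra hne
      rw [coeff_monomial, if_neg (fun h => hne h.symm)] at hcoeff
      exact hcoeff rfl
    rw [Finset.mem_filter] at hc
    obtain ⟨hcf, hcy⟩ := hc
    have hlt := (hfsupp c hcf).1
    have hyE' : yPart E' = u := yPart_eq_u ax u
    have := (hcomp c E').mp hlt
    rcases this with h | h
    · rw [hcy, hyE'] at h
      exact absurd h (lt_irrefl _)
    · rw [hax, ← hxE']
      exact h.2
  refine ⟨q, hqhom, hqsupp, ?_⟩
  have h1 : ιS K n m (monomial ax 1) * ymon K n m u = monomial E' (1 : K) := by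
    rw [iota_monomial_mul_ymon, hE'def]
  have h2mul : ιS K n m q * ymon K n m u = f - f₂ := by
    rw [← hsplit]; ring
  rw [h1, h2mul, hfdef]
  have : monomial E' (1:K) - (monomial E' (1:K) - h2 - f₂) = h2 + f₂ := by ring
  rw [this]
  exact Submodule.add_mem _ (hNJ h2 hh2J) hf₂N

end AuxGEN


section AuxCO

open MvPolynomial Finsupp

variable {K : Type} [Field K] {n m : ℕ}

lemma hcomp_le {ord : MonomialOrder (Fin n ⊕ Fin m)} {ordY : MonomialOrder (Fin m)}
    {ordX : MonomialOrder (Fin n)} (hcomp : ComparesYFirst ord ordY ordX)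
    {c d : (Fin n ⊕ Fin m) →₀ ℕ} (hy : yPart c = yPart d)
    (hx : ordX.toSyn (xPart c) ≤ ordX.toSyn (xPart d)) :
    ord.toSyn c ≤ ord.toSyn d := by
  rcases eq_or_lt_of_le hx with h | h
  · have : xPart c = xPart d := ordX.toSyn.injective h
    rw [parts_ext this hy]
  · exact le_of_lt ((hcomp c d).mpr (Or.inr ⟨hy, h⟩))

lemma sum_single_one (i : Fin n) : ∑ i' : Fin n, (single i 1 : Fin n →₀ ℕ) i' = 1 := by
  simp [Finsupp.single_apply]

lemma whc_mul_ymon (dY : Fin m → ℕ) (t : S K n) (u : Fin m →₀ ℕ) (d : ℕ) :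
    weightedHomogeneousComponent (wt (n := n) dY)
        ((d, 0) + weight (wt (n := n) dY) (er (n := n) u)) (ιS K n m t * ymon K n m u) =
      ιS K n m (homogeneousComponent d t) * ymon K n m u := by
  classical
  induction t using MvPolynomial.induction_on' with
  | monomial a r =>
    rw [iota_monomial_mul_ymon]
    have hw : weight (wt (n := n) dY) (el (m := m) a + er u) =
        ((∑ i, a i : ℕ), (0 : ℕ)) + weight (wt (n := n) dY) (er (n := n) u) := by
      rw [map_add, weight_el]
    have hdeg : Finsupp.degree a = ∑ i, a i := sum_support_eq_sum_univ a
    by_cases hda : (∑ i, a i) = d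
    · have h1 : IsWeightedHomogeneous (wt (n := n) dY) (monomial (el (m := m) a + er u) r)
          ((d, 0) + weight (wt (n := n) dY) (er (n := n) u)) := by
        apply isWeightedHomogeneous_monomial
        rw [hw, hda]
      rw [IsWeightedHomogeneous.weightedHomogeneousComponent_same h1]
      have h2 : IsWeightedHomogeneous (1 : Fin n → ℕ) (monomial a r) d := by
        apply isWeightedHomogeneous_monomial
        rw [← hda, ← hdeg, degree_eq_weight_one]
        rfl
      rw [homogeneousComponent,
        IsWeightedHomogeneous.weightedHomogeneousComponent_same h2,
        iota_monomial_mul_ymon]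
    · have h1 : IsWeightedHomogeneous (wt (n := n) dY) (monomial (el (m := m) a + er u) r)
          (((∑ i, a i : ℕ), (0 : ℕ)) + weight (wt (n := n) dY) (er (n := n) u)) :=
        isWeightedHomogeneous_monomial _ _ _ hw
      rw [IsWeightedHomogeneous.weightedHomogeneousComponent_ne _ h1 (by
        intro h
        have := add_right_cancel h
        rw [Prod.mk.injEq] at this
        exact hda this.1.symm)]
      have h2 : IsWeightedHomogeneous (1 : Fin n → ℕ) (monomial a r)
          (∑ i, a i : ℕ) := by
        apply isWeightedHomogeneous_monomial
        rw [← hdeg, degree_eq_weight_one]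
        rfl
      rw [homogeneousComponent,
        IsWeightedHomogeneous.weightedHomogeneousComponent_ne _ h2
          (fun h => hda h.symm), map_zero, zero_mul]
  | add p q hp hq =>
    simp only [map_add, add_mul, hp, hq]

lemma N_whc_closed {dY : Fin m → ℕ} {J : Ideal (TT K n m)}
    (hbihom : IsBihomogIdeal K n m dY J) (B : Set (Fin m →₀ ℕ)) (δ : ℕ × ℕ)
    {p : TT K n m}
    (hp : p ∈ Submodule.span (S K n) (ymon K n m '' B) ⊔
      (J : Submodule (TT K n m) (TT K n m)).restrictScalars (S K n)) :
    weightedHomogeneousComponent (wt (n := n) dY) δ p ∈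
      Submodule.span (S K n) (ymon K n m '' B) ⊔
        (J : Submodule (TT K n m) (TT K n m)).restrictScalars (S K n) := by
  classical
  rw [Submodule.mem_sup] at hp
  obtain ⟨p₁, hp₁, g, hg, rfl⟩ := hp
  rw [map_add]
  apply Submodule.add_mem
  · apply Submodule.mem_sup_left
    apply mem_span_ymon_of_support
    intro c hc
    exact support_yPart_of_mem_span B p₁ hp₁ c (support_whc hc).1
  · apply Submodule.mem_sup_right
    rw [Submodule.restrictScalars_mem] at hg ⊢
    exact J_homog hbihom δ hg

end AuxCO


section AuxIND

open MvPolynomial Finsupp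

variable {K : Type} [Field K] {n m : ℕ}

/-- The inductive step: every homogeneous element of positive degree of the colon ideal
lies in the ideal generated by the linear forms it contains. -/
lemma IND {dY : Fin m → ℕ} {J : Ideal (TT K n m)} {ord : MonomialOrder (Fin n ⊕ Fin m)}
    {ordY : MonomialOrder (Fin m)} {ordX : MonomialOrder (Fin n)}
    (hcomp : ComparesYFirst ord ordY ordX)
    (hbihom : IsBihomogIdeal K n m dY J)
    {D : Set ((Fin n ⊕ Fin m) →₀ ℕ)}
    (hD : inIdeal ord J = Ideal.span ((fun c => monomial c (1 : K)) '' D))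
    (hD1 : ∀ d ∈ D, (∑ i : Fin n, d (Sum.inl i)) ≤ 1)
    (u : Fin m →₀ ℕ) (B : Set (Fin m →₀ ℕ))
    (hBlt : ∀ b ∈ B, ordY.toSyn b < ordY.toSyn u)
    (hBmem : ∀ b : Fin m →₀ ℕ, ydeg m b = ydeg m u → ordY.toSyn b < ordY.toSyn u → b ∈ B)
    (hUnot : monomial (er (n := n) u) (1 : K) ∉ inIdeal ord J)
    (d : ℕ) (hd : 1 ≤ d) :
    ∀ t : S K n, t ∈ homogeneousSubmodule (Fin n) K d →
      ιS K n m t * ymon K n m u ∈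
        (Submodule.span (S K n) (ymon K n m '' B) ⊔
          (J : Submodule (TT K n m) (TT K n m)).restrictScalars (S K n)) →
      t ∈ Ideal.span {f : S K n | f ∈ homogeneousSubmodule (Fin n) K 1 ∧
        ιS K n m f * ymon K n m u ∈
          (Submodule.span (S K n) (ymon K n m '' B) ⊔
            (J : Submodule (TT K n m) (TT K n m)).restrictScalars (S K n))} := by
  classical
  set N : Submodule (S K n) (TT K n m) :=
    Submodule.span (S K n) (ymon K n m '' B) ⊔
      (J : Submodule (TT K n m) (TT K n m)).restrictScalars (S K n) with hNdef
  set L : Set (S K n) := {f : S K n | f ∈ homogeneousSubmodule (Fin n) K 1 ∧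
    ιS K n m f * ymon K n m u ∈ N} with hLdef
  have hNJ : ∀ g ∈ J, g ∈ N := by
    intro g hg
    exact Submodule.mem_sup_right ((Submodule.restrictScalars_mem _ _ _).mpr hg)
  have hN1 : ∀ b : Fin m →₀ ℕ, ydeg m b = ydeg m u → ordY.toSyn b < ordY.toSyn u →
      ymon K n m b ∈ N := by
    intro b h1 h2
    exact Submodule.mem_sup_left (Submodule.subset_span ⟨b, hBmem b h1 h2, rfl⟩)
  suffices h : ∀ v : ordX.syn, ∀ t : S K n, ordX.toSyn (leadExp ordX t) = v →
      t ∈ homogeneousSubmodule (Fin n) K d → ιS K n m t * ymon K n m u ∈ N →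
      t ∈ Ideal.span L by
    intro t ht htN
    exact h _ t rfl ht htN
  intro v
  induction v using WellFoundedLT.induction with
  | _ v IH =>
  intro t hlead ht htN
  by_cases ht0 : t = 0
  · subst ht0
    exact Ideal.zero_mem _
  -- leading monomial of t
  set lmt := leadExp ordX t with hlmt
  have hlmem : lmt ∈ t.support := leadExp_mem ordX ht0
  have hlc : coeff lmt t ≠ 0 := MvPolynomial.mem_support_iff.mp hlmem
  -- decompose ιS t * U
  rw [hNdef, Submodule.mem_sup] at htN
  obtain ⟨p₁, hp₁, g, hgJ, hpg⟩ := htN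
  rw [Submodule.restrictScalars_mem] at hgJ
  set E : (Fin n ⊕ Fin m) →₀ ℕ := el lmt + er u with hEdef
  have hyE : yPart E = u := yPart_eq_u lmt u
  have hxE : xPart E = lmt := xPart_eq_ax lmt u
  have hp₁supp := support_yPart_of_mem_span B p₁ hp₁
  have hcoeffp₁ : coeff E p₁ = 0 := by
    by_contra h
    have := hp₁supp E (MvPolynomial.mem_support_iff.mpr h)
    rw [hyE] at this
    exact absurd (hBlt u this) (lt_irrefl _)
  have hgeq : g = ιS K n m t * ymon K n m u - p₁ := by
    rw [← hpg]; ring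
  have hcoeffg : coeff E g ≠ 0 := by
    rw [hgeq, MvPolynomial.coeff_sub, hcoeffp₁, sub_zero, hEdef, coeff_iota_mul_ymon]
    exact hlc
  have hg0 : g ≠ 0 := fun h => hcoeffg (by rw [h]; simp)
  have hsuppg : ∀ c ∈ g.support, ord.toSyn c ≤ ord.toSyn E := by
    intro c hc
    have hcg : coeff c g ≠ 0 := MvPolynomial.mem_support_iff.mp hc
    rw [hgeq, MvPolynomial.coeff_sub] at hcg
    by_cases h1 : coeff c (ιS K n m t * ymon K n m u) = 0
    · rw [h1, zero_sub, neg_ne_zero] at hcg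
      have hyc := hp₁supp c (MvPolynomial.mem_support_iff.mpr hcg)
      apply le_of_lt
      apply (hcomp c E).mpr
      left
      rw [hyE]
      exact hBlt _ hyc
    · obtain ⟨a, ha, rfl⟩ := support_iota_mul_ymon t u (MvPolynomial.mem_support_iff.mpr h1)
      apply hcomp_le hcomp
      · rw [hyE, yPart_eq_u]
      · rw [hxE, xPart_eq_ax]
        exact le_leadExp ordX ha
  have hleadg : leadExp ord g = E := leadExp_eq ord hcoeffg hsuppg
  have hEin : monomial E (1 : K) ∈ inIdeal ord J := by
    rw [← hleadg]
    exact monomial_leadExp_mem_inIdeal ord hgJ hg0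
  obtain ⟨dd, hddD, hddle⟩ := exists_dvd_of_mem_inIdeal ord hD hEin
  rcases Nat.le_one_iff_eq_zero_or_eq_one.mp (hD1 dd hddD) with hsum | hsum
  · -- pure y generator: contradiction with hUnot
    exfalso
    apply hUnot
    apply mem_inIdeal_of_dvd ord _ (by
      rw [hD]
      exact Ideal.subset_span ⟨dd, hddD, rfl⟩)
    · rw [Finsupp.le_def]
      rintro (i | j)
      · have : dd (Sum.inl i) = 0 :=
          Finset.sum_eq_zero_iff.mp hsum i (Finset.mem_univ i)
        simp [this]
      · have h1 : dd (Sum.inr j) ≤ E (Sum.inr j) := hddle (Sum.inr j)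
        have h2 : E (Sum.inr j) = u j := by
          rw [hEdef]
          simp
        rw [h2] at h1
        simpa using h1
  · -- the x-part of the generator is a single variable x_i
    obtain ⟨i, hi⟩ : ∃ i : Fin n, dd (Sum.inl i) ≠ 0 := by
      by_contra h
      push_neg at h
      rw [Finset.sum_eq_zero (fun i _ => h i)] at hsum
      exact absurd hsum.symm one_ne_zero
    have hddi : dd (Sum.inl i) = 1 ∧ ∀ i' : Fin n, i' ≠ i → dd (Sum.inl i') = 0 := by
      have herase : dd (Sum.inl i) + ∑ x ∈ Finset.univ.erase i, dd (Sum.inl x) = 1 := by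
        rw [← hsum]
        exact Finset.add_sum_erase Finset.univ (fun i' => dd (Sum.inl i')) (Finset.mem_univ i)
      constructor
      · omega
      · intro i' hi'
        have h1 : ∑ x ∈ Finset.univ.erase i, dd (Sum.inl x) = 0 := by omega
        exact Finset.sum_eq_zero_iff.mp h1 i' (Finset.mem_erase.mpr ⟨hi', Finset.mem_univ i'⟩)
    have hlmti : 1 ≤ lmt i := by
      have := hddle (Sum.inl i)
      rw [hEdef] at this
      simp only [Finsupp.add_apply, el_apply_inl, er_apply_inl, add_zero] at this
      omega
    set E2 : (Fin n ⊕ Fin m) →₀ ℕ := el (single i 1) + er u with hE2def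
    have hE2in : monomial E2 (1 : K) ∈ inIdeal ord J := by
      apply mem_inIdeal_of_dvd ord _ (by
        rw [hD]
        exact Ideal.subset_span ⟨dd, hddD, rfl⟩)
      rw [Finsupp.le_def]
      rintro (i' | j)
      · by_cases h : i' = i
        · subst h
          rw [hddi.1]
          simp [hE2def, Finsupp.single_apply]
        · rw [hddi.2 i' h]
          simp
      · have h1 : dd (Sum.inr j) ≤ E (Sum.inr j) := hddle (Sum.inr j)
        have h2 : E (Sum.inr j) = u j := by rw [hEdef]; simp
        rw [h2] at h1
        simpa [hE2def] using h1
    obtain ⟨q, hq1, hq2, hq3⟩ := GEN hcomp hbihom N hNJ u hN1 (single i 1) hE2in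
    rw [sum_single_one i] at hq1
    set ℓ : S K n := monomial (single i 1) (1 : K) - q with hℓdef
    have hℓL : ℓ ∈ L := by
      rw [hLdef]
      constructor
      · apply Submodule.sub_mem
        · rw [mem_homogeneousSubmodule]
          apply isHomogeneous_monomial
          rw [sum_support_eq_sum_univ]
          exact sum_single_one i
        · exact hq1
      · rw [map_sub, sub_mul]
        exact hq3
    set v' : Fin n →₀ ℕ := lmt - single i 1 with hv'def
    have hvsplit : v' + single i 1 = lmt :=
      tsub_add_cancel_of_le (Finsupp.single_le_iff.mpr hlmti)
    have hsumlmt : ∑ i' : Fin n, lmt i' = d := by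
      have hth := (mem_homogeneousSubmodule _ _).mp ht
      have := hth hlc
      rw [← sum_support_eq_sum_univ, degree_eq_weight_one]
      exact this
    have hsumv' : ∑ i' : Fin n, v' i' = d - 1 := by
      have := congrArg (fun a => ∑ i' : Fin n, a i') hvsplit
      simp only [Finsupp.add_apply, Finset.sum_add_distrib] at this
      rw [sum_single_one i] at this
      omega
    set c0 : K := coeff lmt t with hc0def
    set t' : S K n := t - c0 • (monomial v' 1 * ℓ) with ht'def
    have hmono_mul : monomial v' (1 : K) * monomial (single i 1) (1 : K) =
        monomial lmt (1 : K) := by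
      rw [monomial_mul, one_mul, hvsplit]
    have ht'eq : t' = (t - c0 • monomial lmt 1) + c0 • (monomial v' 1 * q) := by
      rw [ht'def, hℓdef, mul_sub, hmono_mul, smul_sub]
      ring
    have hℓspan : monomial v' (1 : K) * ℓ ∈ Ideal.span L :=
      Ideal.mul_mem_left _ _ (Ideal.subset_span hℓL)
    have hsmulspan : c0 • (monomial v' 1 * ℓ) ∈ Ideal.span L := by
      rw [smul_eq_C_mul]
      exact Ideal.mul_mem_left _ _ hℓspan
    by_cases ht'0 : t' = 0
    · have : t = c0 • (monomial v' 1 * ℓ) := by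
        have := ht'0
        rw [ht'def] at this
        linear_combination this
      rw [this]
      exact hsmulspan
    -- t' is nonzero: use the inductive hypothesis
    have ht'N : ιS K n m t' * ymon K n m u ∈ N := by
      have heq : ιS K n m t' * ymon K n m u =
          ιS K n m t * ymon K n m u -
            ιS K n m (c0 • monomial v' 1) *
              (ιS K n m ℓ * ymon K n m u) := by
        rw [ht'def, map_sub, sub_mul]
        congr 1
        have : (c0 • (monomial v' 1 * ℓ)) = (c0 • monomial v' (1:K)) * ℓ := by
          rw [smul_mul_assoc]
        rw [this, map_mul, mul_assoc]
      rw [heq]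
      apply Submodule.sub_mem
      · rw [hNdef, Submodule.mem_sup]
        exact ⟨p₁, hp₁, g, (Submodule.restrictScalars_mem _ _ _).mpr hgJ, hpg⟩
      · rw [← smul_tt]
        apply Submodule.smul_mem
        rw [hℓdef, map_sub, sub_mul]
        exact hq3
    have ht'hom : t' ∈ homogeneousSubmodule (Fin n) K d := by
      rw [ht'def]
      apply Submodule.sub_mem _ ht
      apply Submodule.smul_mem
      rw [mem_homogeneousSubmodule]
      have h1 : (monomial v' (1 : K)).IsHomogeneous (d - 1) := by
        apply isHomogeneous_monomial
        rw [sum_support_eq_sum_univ]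
        exact hsumv'
      have h2 : ℓ.IsHomogeneous 1 := by
        have := hℓL.1
        rwa [mem_homogeneousSubmodule] at this
      have h3 := h1.mul h2
      rwa [Nat.sub_add_cancel hd] at h3
    have ht'supp : ∀ c ∈ t'.support, ordX.toSyn c < ordX.toSyn lmt := by
      intro c hc
      rw [ht'eq] at hc
      have := MvPolynomial.support_add hc
      rw [Finset.mem_union] at this
      rcases this with h | h
      · have hcc : coeff c (t - c0 • monomial lmt 1) ≠ 0 := MvPolynomial.mem_support_iff.mp h
        have hcne : c ≠ lmt := by
          rintro rfl
          rw [MvPolynomial.coeff_sub, MvPolynomial.coeff_smul, coeff_monomial, if_pos rfl,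
            smul_eq_mul, mul_one, hc0def, sub_self] at hcc
          exact hcc rfl
        have hct : coeff c t ≠ 0 := by
          rw [MvPolynomial.coeff_sub, MvPolynomial.coeff_smul, coeff_monomial,
            if_neg (Ne.symm hcne), smul_eq_mul, mul_zero, sub_zero] at hcc
          exact hcc
        exact lt_of_le_of_ne (le_leadExp ordX (MvPolynomial.mem_support_iff.mpr hct))
          (fun hh => hcne (ordX.toSyn.injective hh))
      · have h1 := MvPolynomial.support_smul h
        have h2 := MvPolynomial.support_mul _ _ h1
        rw [Finset.mem_add] at h2
        obtain ⟨c1, hc1, c2, hc2, rfl⟩ := h2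
        rw [MvPolynomial.support_monomial, if_neg (one_ne_zero (α := K))] at hc1
        rw [Finset.mem_singleton] at hc1
        subst hc1
        have hq2' := hq2 c2 hc2
        calc ordX.toSyn (v' + c2) = ordX.toSyn v' + ordX.toSyn c2 := map_add _ _ _
        _ < ordX.toSyn v' + ordX.toSyn (single i 1) := by
            exact add_lt_add_of_le_of_lt le_rfl hq2'
        _ = ordX.toSyn (v' + single i 1) := (map_add _ _ _).symm
        _ = ordX.toSyn lmt := by rw [hvsplit]
    have hlt : ordX.toSyn (leadExp ordX t') < v := by
      rw [← hlead]
      exact ht'supp _ (leadExp_mem ordX ht'0)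
    have ht'span := IH _ hlt t' rfl ht'hom ht'N
    have : t = t' + c0 • (monomial v' 1 * ℓ) := by
      rw [ht'def]; ring
    rw [this]
    exact Ideal.add_mem _ ht'span hsmulspan

end AuxIND


section AuxFinal

open MvPolynomial Finsupp

variable {K : Type} [Field K] {n m : ℕ}

/-- The colon-ideal dichotomy, for the span of the earlier `y`-monomials. -/
lemma CO {dY : Fin m → ℕ} {J : Ideal (TT K n m)} {ord : MonomialOrder (Fin n ⊕ Fin m)}
    {ordY : MonomialOrder (Fin m)} {ordX : MonomialOrder (Fin n)}
    (hcomp : ComparesYFirst ord ordY ordX)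
    (hbihom : IsBihomogIdeal K n m dY J)
    {D : Set ((Fin n ⊕ Fin m) →₀ ℕ)}
    (hD : inIdeal ord J = Ideal.span ((fun c => monomial c (1 : K)) '' D))
    (hD1 : ∀ d ∈ D, (∑ i : Fin n, d (Sum.inl i)) ≤ 1)
    (k : ℕ) (u : Fin m →₀ ℕ) (hu : ydeg m u = k)
    (B : Set (Fin m →₀ ℕ))
    (hB : B = {b : Fin m →₀ ℕ | ydeg m b = k ∧ ordY.toSyn b < ordY.toSyn u}) :
    ((Submodule.span (S K n) (ymon K n m '' B) ⊔
        (J : Submodule (TT K n m) (TT K n m)).restrictScalars (S K n)).colon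
      (Submodule.span (S K n) {ymon K n m u}) = ⊤) ∨
    GenByLinearForms K n
      ((Submodule.span (S K n) (ymon K n m '' B) ⊔
          (J : Submodule (TT K n m) (TT K n m)).restrictScalars (S K n)).colon
        (Submodule.span (S K n) {ymon K n m u})) := by
  classical
  set N : Submodule (S K n) (TT K n m) :=
    Submodule.span (S K n) (ymon K n m '' B) ⊔
      (J : Submodule (TT K n m) (TT K n m)).restrictScalars (S K n) with hNdef
  set Q : Ideal (S K n) := N.colon (Submodule.span (S K n) {ymon K n m u}) with hQdef
  have hBlt : ∀ b ∈ B, ordY.toSyn b < ordY.toSyn u := by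
    intro b hb
    rw [hB] at hb
    exact hb.2
  have hBmem : ∀ b : Fin m →₀ ℕ, ydeg m b = ydeg m u → ordY.toSyn b < ordY.toSyn u → b ∈ B := by
    intro b h1 h2
    rw [hB]
    exact ⟨h1.trans hu, h2⟩
  have hNJ : ∀ g ∈ J, g ∈ N := by
    intro g hg
    exact Submodule.mem_sup_right ((Submodule.restrictScalars_mem _ _ _).mpr hg)
  have hN1 : ∀ b : Fin m →₀ ℕ, ydeg m b = ydeg m u → ordY.toSyn b < ordY.toSyn u →
      ymon K n m b ∈ N := by
    intro b h1 h2
    exact Submodule.mem_sup_left (Submodule.subset_span ⟨b, hBmem b h1 h2, rfl⟩)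
  have hQmem : ∀ r : S K n, r ∈ Q ↔ ιS K n m r * ymon K n m u ∈ N := by
    intro r
    rw [hQdef, Submodule.mem_colon]
    constructor
    · intro h
      rw [← smul_tt]
      exact h _ (Submodule.mem_span_singleton.mpr ⟨1, one_smul _ _⟩)
    · intro h p hp
      obtain ⟨s, rfl⟩ := Submodule.mem_span_singleton.mp hp
      rw [smul_comm]
      apply Submodule.smul_mem
      rw [smul_tt]
      exact h
  by_cases hone : (1 : S K n) ∈ Q
  · left
    rw [hQdef] at hone ⊢
    exact (Ideal.eq_top_iff_one _).mpr hone
  right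
  have hUnot : monomial (er (n := n) u) (1 : K) ∉ inIdeal ord J := by
    intro hUin
    apply hone
    have h0 : el (0 : Fin n →₀ ℕ) + er (n := n) u = er u := by
      have : el (0 : Fin n →₀ ℕ) = (0 : (Fin n ⊕ Fin m) →₀ ℕ) := by
        rw [el]
        exact Finsupp.mapDomain_zero
      rw [this, zero_add]
    obtain ⟨q, hq1, hq2, hq3⟩ := GEN hcomp hbihom N hNJ u hN1 0 (by rwa [h0])
    have hq0 : q = 0 := by
      by_contra h
      obtain ⟨a, ha⟩ := MvPolynomial.support_nonempty.mpr h
      exact toSyn_zero_min ordX a (hq2 a ha)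
    rw [hq0, map_zero, zero_mul, sub_zero] at hq3
    have hmon1 : (monomial (0 : Fin n →₀ ℕ) (1 : K)) = (1 : S K n) := by
      rw [monomial_zero']
      exact C_1
    rw [hmon1] at hq3
    rw [hQmem, map_one, one_mul]
    rwa [map_one, one_mul] at hq3
  set L : Set (S K n) := {f : S K n | f ∈ homogeneousSubmodule (Fin n) K 1 ∧
    ιS K n m f * ymon K n m u ∈ N} with hLdef
  refine ⟨L, fun f hf => hf.1, ?_⟩
  apply le_antisymm
  · -- Q ≤ span L
    intro r hr
    have hrN := (hQmem r).mp hr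
    -- every homogeneous component of r is in Q
    have hcompQ : ∀ d : ℕ, homogeneousComponent d r ∈ Q := by
      intro d
      rw [hQmem]
      rw [← whc_mul_ymon]
      exact N_whc_closed hbihom B _ hrN
    have hcompL : ∀ d : ℕ, homogeneousComponent d r ∈ Ideal.span L := by
      intro d
      rcases Nat.eq_zero_or_pos d with hd0 | hdpos
      · subst hd0
        rw [homogeneousComponent_zero]
        by_cases hc : coeff 0 r = 0
        · rw [hc, map_zero]
          exact Ideal.zero_mem _
        · exfalso
          apply hone
          have hCc : C (coeff 0 r) ∈ Q := by
            have := hcompQ 0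
            rwa [homogeneousComponent_zero] at this
          have : (C ((coeff 0 r)⁻¹) : S K n) * C (coeff 0 r) ∈ Q :=
            Ideal.mul_mem_left _ _ hCc
          rwa [← C_mul, inv_mul_cancel₀ hc, C_1] at this
      · apply IND hcomp hbihom hD hD1 u B hBlt hBmem hUnot d hdpos
        · rw [mem_homogeneousSubmodule]
          exact homogeneousComponent_isHomogeneous d r
        · rw [← hNdef]
          exact (hQmem _).mp (hcompQ d)
    have hsum : (∑ d ∈ Finset.range (r.totalDegree + 1), homogeneousComponent d r) ∈
        Ideal.span L := Ideal.sum_mem _ (fun d _ => hcompL d)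
    rwa [sum_homogeneousComponent] at hsum
  · -- span L ≤ Q
    rw [Ideal.span_le]
    intro f hf
    rw [SetLike.mem_coe, hQmem]
    exact hf.2

end AuxFinal

/-- If the defining ideal `J` of the bigraded algebra `A = S[A_1] = T/J`
satisfies the x-condition with respect to a monomial order comparing the `y`-part first,
then every component `A_k`, `k ≥ 1`, has linear quotients as a graded `S`-module. -/
theorem statement5 (K : Type) [Field K] (n m : ℕ)
    (dY : Fin m → ℕ) (J : Ideal (TT K n m))
    (ord : MonomialOrder (Fin n ⊕ Fin m))
    (ordY : MonomialOrder (Fin m)) (ordX : MonomialOrder (Fin n))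
    (hcomp : ComparesYFirst ord ordY ordX)
    (hbihom : IsBihomogIdeal K n m dY J)
    (hS : SInjectsModJ K n m J)
    (hx : XCondition ord J) :
    ∀ k : ℕ, 1 ≤ k → AkHasLinearQuotients K n m J k := by
  classical
  obtain ⟨D, hD1, hD⟩ := hx
  intro k _
  set Mk : Finset (Fin m →₀ ℕ) := Finset.univ.finsuppAntidiag k with hMk
  have hMkmem : ∀ c : Fin m →₀ ℕ, c ∈ Mk ↔ ydeg m c = k := by
    intro c
    rw [hMk, Finset.mem_finsuppAntidiag]
    constructor
    · intro h
      rw [ydeg, ← h.1]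
    · intro h
      refine ⟨?_, Finset.subset_univ _⟩
      rw [ydeg] at h
      rw [← h]
  set FS : Finset ordY.syn := Mk.image (fun c => ordY.toSyn c) with hFS
  set s := FS.card with hs
  set Hiso := FS.orderIsoOfFin rfl with hHiso
  set H : Fin s → (Fin m →₀ ℕ) := fun j => ordY.toSyn.symm ((Hiso j : ordY.syn)) with hH
  have hHsyn : ∀ j, ordY.toSyn (H j) = (Hiso j : ordY.syn) := by
    intro j
    rw [hH]
    exact ordY.toSyn.apply_symm_apply _
  have hHk : ∀ j, ydeg m (H j) = k := by
    intro j
    have hmem : (Hiso j : ordY.syn) ∈ Finset.image (fun c => ordY.toSyn c) Mk := (Hiso j).2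
    rw [Finset.mem_image] at hmem
    obtain ⟨c, hc, hceq⟩ := hmem
    have hHc : H j = c := by
      show ordY.toSyn.symm (Hiso j : ordY.syn) = c
      rw [← hceq, AddEquiv.symm_apply_apply]
    rw [hHc]
    exact (hMkmem c).mp hc
  have hsurj : ∀ c : Fin m →₀ ℕ, ydeg m c = k → ∃ j, H j = c := by
    intro c hc
    have hmem : ordY.toSyn c ∈ FS :=
      Finset.mem_image.mpr ⟨c, (hMkmem c).mpr hc, rfl⟩
    obtain ⟨j, hj⟩ := Hiso.surjective ⟨ordY.toSyn c, hmem⟩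
    refine ⟨j, ?_⟩
    show ordY.toSyn.symm (Hiso j : ordY.syn) = c
    have hcoe : (Hiso j : ordY.syn) = ordY.toSyn c := by rw [hj]
    rw [hcoe, AddEquiv.symm_apply_apply]
  have hmono : ∀ j j' : Fin s, j' < j → ordY.toSyn (H j') < ordY.toSyn (H j) := by
    intro j j' hlt
    rw [hHsyn, hHsyn]
    exact Subtype.coe_lt_coe.mpr (Hiso.lt_iff_lt.mpr hlt)
  have hbefore : ∀ (j : Fin s) (b : Fin m →₀ ℕ), ydeg m b = k →
      ordY.toSyn b < ordY.toSyn (H j) → ∃ j', j' < j ∧ H j' = b := by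
    intro j b hb hblt
    obtain ⟨j', hj'⟩ := hsurj b hb
    refine ⟨j', ?_, hj'⟩
    rw [← hj'] at hblt
    rw [hHsyn, hHsyn] at hblt
    exact Hiso.lt_iff_lt.mp (Subtype.coe_lt_coe.mp hblt)
  refine ⟨s, H, hHk, ?_, ?_⟩
  · intro c hc
    obtain ⟨j, rfl⟩ := hsurj c hc
    apply Submodule.mem_sup_left
    exact Submodule.subset_span ⟨j, rfl⟩
  · intro j
    set B : Set (Fin m →₀ ℕ) :=
      {b : Fin m →₀ ℕ | ydeg m b = k ∧ ordY.toSyn b < ordY.toSyn (H j)} with hBdef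
    have hsetEq : (fun j' => ymon K n m (H j')) '' {i : Fin s | i < j} = ymon K n m '' B := by
      ext x
      constructor
      · rintro ⟨j', hj', rfl⟩
        exact ⟨H j', ⟨hHk j', hmono j j' hj'⟩, rfl⟩
      · rintro ⟨b, hb, rfl⟩
        obtain ⟨j', hj', hj'eq⟩ := hbefore j b hb.1 hb.2
        exact ⟨j', hj', by show ymon K n m (H j') = ymon K n m b; rw [hj'eq]⟩
    rw [hsetEq]
    exact CO hcomp hbihom hD hD1 k (H j) (hHk j) B hBdef

end Paper
end

section
/- Let A = Sym(M) or more generally a bigraded algebra T/J as above, and let 𝒢 be the reduced Gröbner basis of J with respect to the monomial order <. If every element of 𝒢 lies in the ideal (x_1,...,x_n)T, then for each k ≥ 1 the set {h_1,...,h_s} of elements of A_k corresponding to standard monomials of y-degree k is a minimal generating set of the S-module A_k. -/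
open MvPolynomial Finsupp

section AuxGroebner

open MvPolynomial

variable {K : Type} [Field K] {σ : Type*}

lemma leadExp_mem_support (m : MonomialOrder σ) {p : MvPolynomial σ K} (hp : p ≠ 0) :
    leadExp m p ∈ p.support := by
  obtain ⟨b, hb, he⟩ := Finset.exists_mem_eq_sup p.support
    (MvPolynomial.support_nonempty.mpr hp) (fun c => m.toSyn c)
  rw [leadExp, he, AddEquiv.symm_apply_apply]
  exact hb

lemma toSyn_le_leadExp (m : MonomialOrder σ) {p : MvPolynomial σ K} {d : σ →₀ ℕ}
    (hd : d ∈ p.support) : m.toSyn d ≤ m.toSyn (leadExp m p) := by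
  rw [leadExp, AddEquiv.apply_symm_apply]
  exact Finset.le_sup hd

/-- A Gröbner basis generates the ideal. -/
lemma mem_span_of_groebner (m : MonomialOrder σ)
    (J : Ideal (MvPolynomial σ K)) (Gs : Set (MvPolynomial σ K))
    (hGsJ : Gs ⊆ (J : Set (MvPolynomial σ K)))
    (hGs0 : ∀ g ∈ Gs, g ≠ 0 ∧ MvPolynomial.coeff (leadExp m g) g = 1)
    (hGB : inIdeal m J =
      Ideal.span ((fun g => monomial (leadExp m g) (1 : K)) '' Gs)) :
    ∀ f ∈ J, f ∈ Ideal.span Gs := by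
  classical
  have himg : (fun g => monomial (leadExp m g) (1 : K)) '' Gs
      = (fun c => monomial c (1 : K)) '' (leadExp m '' Gs) := by
    rw [Set.image_image]
  suffices h : ∀ s : m.syn, ∀ f ∈ J, m.toSyn (leadExp m f) = s → f ∈ Ideal.span Gs by
    intro f hf; exact h _ f hf rfl
  intro s
  induction s using WellFoundedLT.induction with
  | _ s IH =>
  intro f hf hfs
  by_cases hf0 : f = 0
  · simp [hf0]
  · have hmem : (monomial (leadExp m f) (1 : K)) ∈ inIdeal m J :=
      Ideal.subset_span ⟨f, ⟨hf, hf0⟩, rfl⟩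
    rw [hGB, himg, mem_ideal_span_monomial_image] at hmem
    obtain ⟨si, hsi, hle⟩ := hmem (leadExp m f) (by simp [support_monomial])
    obtain ⟨g, hg, rfl⟩ := hsi
    obtain ⟨δ, hδ⟩ := exists_add_of_le hle
    set c := MvPolynomial.coeff (leadExp m f) f with hc
    set u := monomial δ c * g with hu
    have hcu : MvPolynomial.coeff (leadExp m f) u = c := by
      rw [hu, hδ, add_comm (leadExp m g) δ, coeff_monomial_mul, (hGs0 g hg).2, mul_one]
    have huJ : u ∈ J := Ideal.mul_mem_left _ _ (hGsJ hg)
    have huS : u ∈ Ideal.span Gs := Ideal.mul_mem_left _ _ (Ideal.subset_span hg)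
    have hsupp : ∀ d ∈ (f - u).support, m.toSyn d ≤ s := by
      intro d hd
      rcases Finset.mem_union.mp (MvPolynomial.support_sub σ f u hd) with hd | hd
      · rw [← hfs]; exact toSyn_le_leadExp m hd
      · have h2 := MvPolynomial.support_mul _ _ hd
        rw [Finset.mem_add] at h2
        obtain ⟨a, ha, b, hb, rfl⟩ := h2
        have ha' : a = δ := by
          have := MvPolynomial.support_monomial_subset (s := δ) (a := c) ha
          simpa using this
        subst ha'
        calc m.toSyn (a + b) = m.toSyn a + m.toSyn b := map_add _ _ _
          _ ≤ m.toSyn a + m.toSyn (leadExp m g) :=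
              add_le_add_right (toSyn_le_leadExp m hb) _
          _ = m.toSyn (leadExp m f) := by rw [← map_add, add_comm, ← hδ]
          _ = s := hfs
    have hcf' : MvPolynomial.coeff (leadExp m f) (f - u) = 0 := by
      rw [MvPolynomial.coeff_sub, hcu, ← hc, sub_self]
    by_cases hfu : f - u = 0
    · have hfeq : f = u := by
        have := sub_eq_zero.mp hfu; exact this
      rw [hfeq]; exact huS
    · have hne : leadExp m (f - u) ≠ leadExp m f := by
        intro he
        have hmem' := leadExp_mem_support m hfu
        rw [he] at hmem'
        exact (MvPolynomial.mem_support_iff.mp hmem') hcf'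
      have hlt : m.toSyn (leadExp m (f - u)) < s := by
        refine lt_of_le_of_ne (hsupp _ (leadExp_mem_support m hfu)) ?_
        intro he
        exact hne (m.toSyn.injective (by rw [he, hfs]))
      have hrec := IH _ hlt (f - u) (J.sub_mem hf huJ) rfl
      have hfeq : f = (f - u) + u := by ring
      rw [hfeq]; exact Ideal.add_mem _ hrec huS

end AuxGroebner

namespace Paper

open Finsupp

/-- If the reduced Gröbner basis `𝒢` of `J` is contained in `(x_1,…,x_n)T`,
then for each `k ≥ 1` the classes of the standard monomials of `y`-degree `k` form a minimal
generating set of the `S`-module `A_k`. -/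
theorem statement7 (K : Type) [Field K] (n m : ℕ)
    (dY : Fin m → ℕ) (J : Ideal (TT K n m))
    (ord : MonomialOrder (Fin n ⊕ Fin m))
    (ordY : MonomialOrder (Fin m)) (ordX : MonomialOrder (Fin n))
    (hcomp : ComparesYFirst ord ordY ordX)
    (hbihom : IsBihomogIdeal K n m dY J)
    (hS : SInjectsModJ K n m J)
    (hx : XCondition ord J)
    (Gs : Set (TT K n m))
    -- `Gs` is the reduced Gröbner basis of `J` with respect to `<`
    (hGsJ : Gs ⊆ (J : Set (TT K n m)))
    (hGs0 : ∀ g ∈ Gs, g ≠ 0 ∧ MvPolynomial.coeff (leadExp ord g) g = 1)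
    (hGB : inIdeal ord J =
      Ideal.span ((fun g => monomial (leadExp ord g) (1 : K)) '' Gs))
    (hred : ∀ g ∈ Gs, ∀ g' ∈ Gs, ∀ c ∈ g.support,
      leadExp ord g' ≤ c → g' = g ∧ c = leadExp ord g)
    -- `𝒢 ⊆ (x_1,…,x_n) T`
    (hGx : ∀ g ∈ Gs, g ∈ Ideal.span (Set.range fun i : Fin n => (X (Sum.inl i) : TT K n m)))
    (k : ℕ) (hk : 1 ≤ k)
    (s : ℕ) (H : Fin s → (Fin m →₀ ℕ))
    (hdeg : ∀ j, ydeg m (H j) = k)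
    (hstd : ∀ j, ymon K n m (H j) ∉ inIdeal ord J)
    (hall : ∀ c : Fin m →₀ ℕ, ydeg m c = k → ymon K n m c ∉ inIdeal ord J → ∃ j, H j = c)
    (hinj : Function.Injective H) :
    -- the `h_j` generate `A_k` …
    (∀ c : Fin m →₀ ℕ, ydeg m c = k →
      ymon K n m c ∈
        Submodule.span (S K n) (Set.range (fun j => ymon K n m (H j))) ⊔
          (J : Submodule (TT K n m) (TT K n m)).restrictScalars (S K n)) ∧
    -- … minimally
    (∀ j : Fin s,
      ymon K n m (H j) ∉
        Submodule.span (S K n) ((fun j' => ymon K n m (H j')) '' {i | i ≠ j}) ⊔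
          (J : Submodule (TT K n m) (TT K n m)).restrictScalars (S K n)) := by
  classical
  -- leading monomials of elements of `Gs` involve an `x`-variable
  have hGlead : ∀ g ∈ Gs, ∃ i : Fin n, leadExp ord g (Sum.inl i) ≠ 0 := by
    intro g hg
    have h1 : g ∈ Ideal.span (MvPolynomial.X '' (Set.range Sum.inl) :
        Set (TT K n m)) := by
      have h := hGx g hg
      rwa [show (Set.range fun i : Fin n => (MvPolynomial.X (Sum.inl i) : TT K n m))
          = MvPolynomial.X '' (Set.range Sum.inl) from by
            rw [← Set.range_comp]; rfl] at h
    rw [MvPolynomial.mem_ideal_span_X_image] at h1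
    obtain ⟨i', hi', hne⟩ := h1 (leadExp ord g)
      (MvPolynomial.mem_support_iff.mpr (by rw [(hGs0 g hg).2]; exact one_ne_zero))
    obtain ⟨i, rfl⟩ := hi'
    exact ⟨i, hne⟩
  -- no pure `y`-monomial lies in the initial ideal
  have hstd' : ∀ c : Fin m →₀ ℕ, ymon K n m c ∉ inIdeal ord J := by
    intro c hmem
    rw [hGB, show ((fun g => MvPolynomial.monomial (leadExp ord g) (1:K)) '' Gs)
        = (fun d => MvPolynomial.monomial d (1:K)) '' (leadExp ord '' Gs) from by
          rw [Set.image_image],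
      MvPolynomial.mem_ideal_span_monomial_image] at hmem
    obtain ⟨si, ⟨g, hg, rfl⟩, hle⟩ := hmem (Finsupp.mapDomain Sum.inr c)
      (by simp [ymon, MvPolynomial.support_monomial])
    obtain ⟨i, hi⟩ := hGlead g hg
    have h0 : (Finsupp.mapDomain Sum.inr c) (Sum.inl i) = 0 :=
      Finsupp.mapDomain_notin_range _ _ (by simp)
    have h1 := Finsupp.le_def.mp hle (Sum.inl i)
    rw [h0, Nat.le_zero] at h1
    exact hi h1
  constructor
  · -- generation
    intro c hc
    obtain ⟨j, rfl⟩ := hall c hc (hstd' c)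
    exact Submodule.mem_sup_left (Submodule.subset_span ⟨j, rfl⟩)
  · -- minimality
    intro j hmemj
    rw [Submodule.mem_sup] at hmemj
    obtain ⟨a, ha, b, hb, hab⟩ := hmemj
    have hbJ : b ∈ J := hb
    -- `J ⊆ (x₁,…,xₙ)T`
    have hJx : ∀ f ∈ J, f ∈ Ideal.span
        (Set.range fun i : Fin n => (MvPolynomial.X (Sum.inl i) : TT K n m)) := by
      intro f hf
      exact Ideal.span_le.mpr (fun g hg => hGx g hg)
        (mem_span_of_groebner ord J Gs hGsJ hGs0 hGB f hf)
    -- specialization `x ↦ 0`, `y ↦ y`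
    set π : TT K n m →ₐ[K] MvPolynomial (Fin m) K :=
      MvPolynomial.aeval
        (Sum.elim (fun _ : Fin n => (0 : MvPolynomial (Fin m) K)) MvPolynomial.X) with hπ
    have hπy : ∀ c : Fin m →₀ ℕ, π (ymon K n m c) = MvPolynomial.monomial c (1 : K) := by
      intro c
      have hy : ymon K n m c
          = MvPolynomial.rename Sum.inr (MvPolynomial.monomial c (1 : K)) := by
        rw [MvPolynomial.rename_monomial]; rfl
      rw [hy, hπ, MvPolynomial.aeval_rename, Sum.elim_comp_inr,
        MvPolynomial.aeval_X_left_apply]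
    have hπb : π b = 0 := by
      have hx := hJx b hbJ
      have hker : Ideal.span
          (Set.range fun i : Fin n => (MvPolynomial.X (Sum.inl i) : TT K n m))
          ≤ RingHom.ker (π : TT K n m →+* MvPolynomial (Fin m) K) := by
        rw [Ideal.span_le]
        rintro _ ⟨i, rfl⟩
        simp [RingHom.mem_ker, hπ]
      exact hker hx
    have hπι : ∀ p : S K n, π (ιS K n m p)
        = MvPolynomial.C (MvPolynomial.constantCoeff p) := by
      intro p
      have : ιS K n m p = MvPolynomial.rename Sum.inl p := rfl
      rw [this, hπ, MvPolynomial.aeval_rename, Sum.elim_comp_inl,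
        MvPolynomial.aeval_zero']
      rfl
    have hcoeff : ∀ x ∈ Submodule.span (S K n)
        ((fun j' => ymon K n m (H j')) '' {i | i ≠ j}),
        MvPolynomial.coeff (H j) (π x) = 0 := by
      intro x hx
      induction hx using Submodule.span_induction with
      | mem x hxm =>
          obtain ⟨i, hi, rfl⟩ := hxm
          rw [hπy, MvPolynomial.coeff_monomial]
          simp [hinj.ne hi]
      | zero => simp
      | add x y _ _ ihx ihy => rw [map_add, MvPolynomial.coeff_add, ihx, ihy, add_zero]
      | smul p x _ ihx =>
          have hsm : p • x = ιS K n m p * x := Algebra.smul_def p x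
          rw [hsm, map_mul, hπι, MvPolynomial.coeff_C_mul, ihx, mul_zero]
    have h0 : MvPolynomial.coeff (H j) (π (ymon K n m (H j))) = 0 := by
      rw [← hab, map_add, hπb, add_zero, hcoeff a ha]
    rw [hπy] at h0
    simp [MvPolynomial.coeff_monomial] at h0

end Paper
end
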